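/- arXiv:2202.05018 — 4 statements merged into one kernel-verified Lean document; each statement's English description precedes it below -/
import Mathlib

section
/- Let ε>0 and η_ε>0 with η_ε/ε ∈ ℕ, let Ω ⊆ U be open subsets of ℝ³, let i ∈ Z_ε(U), and let η ∈ [η_ε, +∞) be such that Q_{η+4ε}(i) ⊆ U. If E ⊆ Z_ε(Ω) is locally flat in Q_η(i) (with respect to U), then E is a simple coordinate laminate in Q_η(i). -/
open Set Filter MeasureTheory Metric
open scoped BigOperators ENNReal Topology

noncomputable section

attribute [local instance] Classical.propDecidable

/-- Three-dimensional Euclidean space. -/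
abbrev E3 := EuclideanSpace ℝ (Fin 3)

/-- `x` is a point of the lattice `εℤ³`. -/
def lat (ε : ℝ) (x : E3) : Prop := ∀ k, ∃ n : ℤ, x k = ε * n

/-- `Z_ε(A) := εℤ³ ∩ A`. -/
def Zset (ε : ℝ) (A : Set E3) : Set E3 := {x | lat ε x ∧ x ∈ A}

/-- The half-open cube `Q_ρ(x) = x + ρ[-1/2,1/2)³`. -/
def cube (ρ : ℝ) (x : E3) : Set E3 := {y | ∀ k, x k - ρ / 2 ≤ y k ∧ y k < x k + ρ / 2}

/-- `k̂ := k + ε(1/2,1/2,1/2)`. -/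
def hat (ε : ℝ) (k : E3) : E3 := WithLp.toLp 2 (fun j => k j + ε / 2)

/-- The "half-cube" pattern: the lattice points of `Q_{2ε}(k̂)` whose `m`-th coordinate
equals `v`.  For `v ∈ {k m, k m + ε}` these are exactly the images of the reference
pattern `{k, k+εe₁, k+εe₂, k+ε(e₁+e₂)}` under rotations by multiples of `π/2`
about axes through `k̂` parallel to coordinate vectors. -/
def halfPattern (ε : ℝ) (k : E3) (m : Fin 3) (v : ℝ) : Set E3 :=
  {p | lat ε p ∧ p ∈ cube (2 * ε) (hat ε k) ∧ p m = v}

/-- `E` is locally flat in `Q_η(x)` (with respect to `U`). -/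
def LocallyFlat (ε η : ℝ) (U E : Set E3) (x : E3) : Prop :=
  ∀ k : E3, lat ε k → (cube η x ∩ cube (2 * ε) (hat ε k)).Nonempty →
    E ∩ cube (2 * ε) (hat ε k) = Zset ε (cube (2 * ε) (hat ε k)) ∩ U ∨
    E ∩ cube (2 * ε) (hat ε k) = ∅ ∨
    ∃ m : Fin 3, ∃ v : ℝ, (v = k m ∨ v = k m + ε) ∧
      E ∩ cube (2 * ε) (hat ε k) = halfPattern ε k m v ∩ U

/-- `E` is cubic in `Q_η(x)` (with respect to `U`), at the mesoscale `ηm`. -/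
def CubicSet (ε ηm η : ℝ) (U E : Set E3) (x : E3) : Prop :=
  ∃ i0 ∈ Zset ε (cube ηm (0 : E3)), ∃ K : Finset E3,
    (∀ k ∈ K, ∃ z : Fin 3 → ℤ, ∀ j, k j = i0 j + ηm * (z j : ℝ)) ∧
    E ∩ cube η x = Zset ε (⋃ k ∈ K, cube ηm k) ∩ cube η x ∩ U

/-- `E` is flat in `Q_{ηm}(x)` (with respect to `U`): cubic and locally flat. -/
def FlatSet (ε ηm : ℝ) (U E : Set E3) (x : E3) : Prop :=
  CubicSet ε ηm ηm U E x ∧ LocallyFlat ε ηm U E x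

/-- `E` is a simple coordinate laminate in `A` with normal `e_m` (with respect to `U`):
there is `h : ℝ → {0,1}` with `χ_{Z_ε(A) ∩ E}(i) = h(i·e_m)·χ_{Z_ε(A)}(i)` for all
`i ∈ Z_ε(U)`. -/
def LaminateWith (ε : ℝ) (U A E : Set E3) (m : Fin 3) : Prop :=
  ∃ h : ℝ → Prop, ∀ i ∈ Zset ε U, (i ∈ Zset ε A ∩ E ↔ h (i m) ∧ i ∈ Zset ε A)

/-- `E` is a simple coordinate laminate in `A` (with respect to `U`). -/
def Laminate (ε : ℝ) (U A E : Set E3) : Prop := ∃ m : Fin 3, LaminateWith ε U A E m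

set_option linter.dupNamespace false


namespace S0Aux

/-- Lattice cell with lower corner `κ` : the 8 points `κ + {0,1}³`. -/
def zcell (κ : Fin 3 → ℤ) : Set (Fin 3 → ℤ) := {c | ∀ j, c j = κ j ∨ c j = κ j + 1}

/-- Integer box. -/
def zbox (a b : Fin 3 → ℤ) : Set (Fin 3 → ℤ) := {n | ∀ j, a j ≤ n j ∧ n j ≤ b j}

/-- Cells (potentially) meeting the box. -/
def Kpred (a b : Fin 3 → ℤ) (κ : Fin 3 → ℤ) : Prop := ∀ j, a j - 1 ≤ κ j ∧ κ j ≤ b j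

/-- Half-pattern cell with normal `m` and active layer `w`. -/
def HalfCell (A : Set (Fin 3 → ℤ)) (κ : Fin 3 → ℤ) (m : Fin 3) (w : ℤ) : Prop :=
  (w = κ m ∨ w = κ m + 1) ∧ ∀ c ∈ zcell κ, (c ∈ A ↔ c m = w)

lemma meets_iff (a b κ : Fin 3 → ℤ) (hab : ∀ j, a j ≤ b j) :
    (∃ c, c ∈ zcell κ ∧ c ∈ zbox a b) ↔ Kpred a b κ := by
  constructor
  · rintro ⟨c, hc, hcb⟩ j
    rcases hc j with h | h <;> have := hcb j <;> omega
  · intro hK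
    refine ⟨fun j => max (a j) (κ j), fun j => ?_, fun j => ?_⟩
    · show max (a j) (κ j) = κ j ∨ max (a j) (κ j) = κ j + 1
      rcases le_total (a j) (κ j) with h | h
      · rw [max_eq_right h]; left; rfl
      · rw [max_eq_left h]; have h1 := hK j; omega
    · show a j ≤ max (a j) (κ j) ∧ max (a j) (κ j) ≤ b j
      exact ⟨le_max_left _ _, max_le (hab j) (hK j).2⟩

lemma exists_pt (κ : Fin 3 → ℤ) (j m : Fin 3) (hjm : j ≠ m) (s v : ℤ)
    (hs : s = κ j ∨ s = κ j + 1) (hv : v = κ m ∨ v = κ m + 1) :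
    ∃ c, c ∈ zcell κ ∧ c j = s ∧ c m = v := by
  refine ⟨fun l => if l = j then s else if l = m then v else κ l, fun l => ?_, ?_, ?_⟩
  · by_cases h1 : l = j
    · subst h1; simpa using hs
    · by_cases h2 : l = m
      · subst h2; simp [h1]; exact hv
      · simp [h1, h2]
  · simp
  · simp [Ne.symm hjm]

lemma exists_pt3 (κ : Fin 3 → ℤ) (j m t : Fin 3) (hjm : j ≠ m) (hjt : j ≠ t) (hmt : m ≠ t)
    (s v u : ℤ) (hs : s = κ j ∨ s = κ j + 1) (hv : v = κ m ∨ v = κ m + 1)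
    (hu : u = κ t ∨ u = κ t + 1) :
    ∃ c, c ∈ zcell κ ∧ c j = s ∧ c m = v ∧ c t = u := by
  refine ⟨fun l => if l = j then s else if l = m then v else if l = t then u else κ l,
    fun l => ?_, ?_, ?_, ?_⟩
  · by_cases h1 : l = j
    · subst h1; simpa using hs
    · by_cases h2 : l = m
      · subst h2; simp [h1]; exact hv
      · by_cases h3 : l = t
        · subst h3; simp [h1, h2]; exact hu
        · simp [h1, h2, h3]
  · simp
  · simp [Ne.symm hjm]
  · simp [Ne.symm hjt, Ne.symm hmt]

lemma shared (κ κ' : Fin 3 → ℤ) (j : Fin 3)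
    (hrel : κ' = Function.update κ j (κ j + 1) ∨ κ = Function.update κ' j (κ' j + 1)) :
    ∃ s, (s = κ j ∨ s = κ j + 1) ∧ (s = κ' j ∨ s = κ' j + 1) ∧ ∀ l, l ≠ j → κ' l = κ l := by
  rcases hrel with h | h
  · refine ⟨κ j + 1, Or.inr rfl, Or.inl ?_, fun l hl => ?_⟩
    · rw [h, Function.update_self]
    · rw [h, Function.update_of_ne hl]
  · refine ⟨κ j, Or.inl rfl, Or.inr ?_, fun l hl => ?_⟩
    · rw [h, Function.update_self]
    · rw [h, Function.update_of_ne hl]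

lemma mem_zcell_of (κ κ' c : Fin 3 → ℤ) (j : Fin 3) (hc : c ∈ zcell κ) (hcj : c j = s)
    (hs' : s = κ' j ∨ s = κ' j + 1) (heq : ∀ l, l ≠ j → κ' l = κ l) : c ∈ zcell κ' := by
  intro l
  by_cases hl : l = j
  · subst hl; rw [hcj]; exact hs'
  · rw [heq l hl]; exact hc l

/-- One-step propagation of half cells in directions `≠ m`. -/
lemma half_step (A : Set (Fin 3 → ℤ)) (a b : Fin 3 → ℤ) (hab : ∀ j, a j ≤ b j)
    (Hyp : ∀ κ, (∃ c, c ∈ zcell κ ∧ c ∈ zbox a b) →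
      (∀ c ∈ zcell κ, c ∈ A) ∨ (∀ c ∈ zcell κ, c ∉ A) ∨
      ∃ m w, (w = κ m ∨ w = κ m + 1) ∧ ∀ c ∈ zcell κ, (c ∈ A ↔ c m = w))
    (κ : Fin 3 → ℤ) (m : Fin 3) (w : ℤ) (hh : HalfCell A κ m w)
    (j : Fin 3) (hjm : j ≠ m) (κ' : Fin 3 → ℤ) (hK' : Kpred a b κ')
    (hrel : κ' = Function.update κ j (κ j + 1) ∨ κ = Function.update κ' j (κ' j + 1)) :
    HalfCell A κ' m w := by
  obtain ⟨s, hs, hs', heq⟩ := shared κ κ' j hrel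
  have hκ'm : κ' m = κ m := heq m (Ne.symm hjm)
  -- the value in {κ m, κ m + 1} different from w
  set w2 : ℤ := if w = κ m then κ m + 1 else κ m with hw2
  have hw2mem : w2 = κ m ∨ w2 = κ m + 1 := by
    rw [hw2]; split_ifs <;> simp
  have hw2ne : w2 ≠ w := by
    rw [hw2]; rcases hh.1 with h | h <;> split_ifs with h' <;> omega
  rcases Hyp κ' ((meets_iff a b κ' hab).mpr hK') with hfull | hempty | ⟨m', w', hw', hhalf'⟩
  · exfalso
    obtain ⟨c, hc, hcj, hcm⟩ := exists_pt κ j m hjm s w2 hs hw2mem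
    have hcA : c ∈ A := hfull c (mem_zcell_of κ κ' c j hc hcj hs' heq)
    have := (hh.2 c hc).mp hcA
    rw [hcm] at this; exact hw2ne this
  · exfalso
    obtain ⟨c, hc, hcj, hcm⟩ := exists_pt κ j m hjm s w hs hh.1
    have hcA : c ∈ A := (hh.2 c hc).mpr hcm
    exact hempty c (mem_zcell_of κ κ' c j hc hcj hs' heq) hcA
  · by_cases hm' : m' = m
    · subst hm'
      obtain ⟨c, hc, hcj, hcm⟩ := exists_pt κ j m' hjm s w hs hh.1
      have hcA : c ∈ A := (hh.2 c hc).mpr hcm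
      have hww' : w = w' := by
        have := (hhalf' c (mem_zcell_of κ κ' c j hc hcj hs' heq)).mp hcA
        rw [hcm] at this; exact this
      refine ⟨?_, ?_⟩
      · rw [hκ'm]; exact hh.1
      · intro c' hc'; rw [hww']; exact hhalf' c' hc'
    · exfalso
      by_cases hm'j : m' = j
      · subst hm'j
        obtain ⟨c1, hc1, hc1j, hc1m⟩ := exists_pt κ m' m hjm s w hs hh.1
        obtain ⟨c2, hc2, hc2j, hc2m⟩ := exists_pt κ m' m hjm s w2 hs hw2mem
        have hc1A : c1 ∈ A := (hh.2 c1 hc1).mpr hc1m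
        have hsw' : s = w' := by
          have := (hhalf' c1 (mem_zcell_of κ κ' c1 m' hc1 hc1j hs' heq)).mp hc1A
          rw [hc1j] at this; exact this
        have hc2A : c2 ∈ A := by
          apply (hhalf' c2 (mem_zcell_of κ κ' c2 m' hc2 hc2j hs' heq)).mpr
          rw [hc2j, hsw']
        have := (hh.2 c2 hc2).mp hc2A
        rw [hc2m] at this; exact hw2ne this
      · -- m' is the third coordinate
        have hκ'm' : κ' m' = κ m' := heq m' hm'j
        set u : ℤ := if w' = κ m' then κ m' + 1 else κ m' with hu
        have humem : u = κ m' ∨ u = κ m' + 1 := by rw [hu]; split_ifs <;> simp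
        have hune : u ≠ w' := by
          rw [hκ'm'] at hw'
          rw [hu]; rcases hw' with h | h <;> split_ifs with h' <;> omega
        obtain ⟨c, hc, hcj, hcm, hcm'⟩ := exists_pt3 κ j m m' hjm (fun h => hm'j h.symm)
          (fun h => hm' h.symm) s w u hs hh.1 humem
        have hcA : c ∈ A := (hh.2 c hc).mpr hcm
        have := (hhalf' c (mem_zcell_of κ κ' c j hc hcj hs' heq)).mp hcA
        rw [hcm'] at this; exact hune this

/-- Path induction in a box, staying in a fixed `m`-slice. -/
lemma path_induction (lo hi : Fin 3 → ℤ) (P : (Fin 3 → ℤ) → Prop) (m : Fin 3)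
    (hstep : ∀ x, (∀ j, lo j ≤ x j ∧ x j ≤ hi j) → ∀ j, j ≠ m →
      ∀ y, (∀ j, lo j ≤ y j ∧ y j ≤ hi j) →
      (y = Function.update x j (x j + 1) ∨ x = Function.update y j (y j + 1)) →
      P x → P y) :
    ∀ x, (∀ j, lo j ≤ x j ∧ x j ≤ hi j) → ∀ y, (∀ j, lo j ≤ y j ∧ y j ≤ hi j) →
      x m = y m → P x → P y := by
  have main : ∀ N : ℕ, ∀ x, (∀ j, lo j ≤ x j ∧ x j ≤ hi j) →
      ∀ y, (∀ j, lo j ≤ y j ∧ y j ≤ hi j) →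
      x m = y m → (∑ j, (y j - x j).natAbs) ≤ N → P x → P y := by
    intro N
    induction N with
    | zero =>
      intro x hx y hy hm hsum hP
      have hxy : x = y := by
        funext j
        have h0 : (y j - x j).natAbs = 0 := by
          have := Finset.sum_eq_zero_iff.mp (Nat.le_zero.mp hsum) j (Finset.mem_univ j)
          exact this
        omega
      rw [← hxy]; exact hP
    | succ N ih =>
      intro x hx y hy hm hsum hP
      by_cases hxy : x = y
      · rw [← hxy]; exact hP
      · have hj : ∃ j, x j ≠ y j := by
          by_contra h; push_neg at h; exact hxy (funext h)
        obtain ⟨j, hj⟩ := hj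
        have hjm : j ≠ m := fun h => hj (h ▸ hm)
        rcases lt_or_gt_of_ne hj with hlt | hgt
        · set x' := Function.update x j (x j + 1) with hx'def
          have hx'box : ∀ l, lo l ≤ x' l ∧ x' l ≤ hi l := by
            intro l
            by_cases hl : l = j
            · subst hl; rw [hx'def, Function.update_self]
              have h1 := hx l; have h2 := hy l; omega
            · rw [hx'def, Function.update_of_ne hl]; exact hx l
          have hPx' := hstep x hx j hjm x' hx'box (Or.inl rfl) hP
          have hx'm : x' m = y m := by
            rw [hx'def, Function.update_of_ne (Ne.symm hjm)]; exact hm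
          have hdec : (∑ l, (y l - x' l).natAbs) < ∑ l, (y l - x l).natAbs := by
            apply Finset.sum_lt_sum
            · intro l _
              by_cases hl : l = j
              · subst hl; rw [hx'def, Function.update_self]; omega
              · rw [hx'def, Function.update_of_ne hl]
            · exact ⟨j, Finset.mem_univ j, by rw [hx'def, Function.update_self]; omega⟩
          exact ih x' hx'box y hy hx'm (by omega) hPx'
        · set x' := Function.update x j (x j - 1) with hx'def
          have hx'box : ∀ l, lo l ≤ x' l ∧ x' l ≤ hi l := by
            intro l
            by_cases hl : l = j
            · subst hl; rw [hx'def, Function.update_self]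
              have h1 := hx l; have h2 := hy l; omega
            · rw [hx'def, Function.update_of_ne hl]; exact hx l
          have hrel : x = Function.update x' j (x' j + 1) := by
            funext l
            by_cases hl : l = j
            · subst hl; rw [Function.update_self, hx'def, Function.update_self]; ring
            · rw [Function.update_of_ne hl, hx'def, Function.update_of_ne hl]
          have hPx' := hstep x hx j hjm x' hx'box (Or.inr hrel) hP
          have hx'm : x' m = y m := by
            rw [hx'def, Function.update_of_ne (Ne.symm hjm)]; exact hm
          have hdec : (∑ l, (y l - x' l).natAbs) < ∑ l, (y l - x l).natAbs := by
            apply Finset.sum_lt_sum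
            · intro l _
              by_cases hl : l = j
              · subst hl; rw [hx'def, Function.update_self]; omega
              · rw [hx'def, Function.update_of_ne hl]
            · exact ⟨j, Finset.mem_univ j, by rw [hx'def, Function.update_self]; omega⟩
          exact ih x' hx'box y hy hx'm (by omega) hPx'
  intro x hx y hy hm hP
  exact main _ x hx y hy hm le_rfl hP

/-- Long-range propagation of half cells within a fixed `m`-slice of `K`. -/
lemma half_prop (A : Set (Fin 3 → ℤ)) (a b : Fin 3 → ℤ) (hab : ∀ j, a j ≤ b j)
    (Hyp : ∀ κ, (∃ c, c ∈ zcell κ ∧ c ∈ zbox a b) →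
      (∀ c ∈ zcell κ, c ∈ A) ∨ (∀ c ∈ zcell κ, c ∉ A) ∨
      ∃ m w, (w = κ m ∨ w = κ m + 1) ∧ ∀ c ∈ zcell κ, (c ∈ A ↔ c m = w))
    (m : Fin 3) (w : ℤ) (κ κ' : Fin 3 → ℤ) (hK : Kpred a b κ) (hK' : Kpred a b κ')
    (hmm : κ m = κ' m) (hh : HalfCell A κ m w) : HalfCell A κ' m w := by
  exact path_induction (fun j => a j - 1) b (fun x => HalfCell A x m w) m
    (fun x hx j hjm y hy hrel hP => half_step A a b hab Hyp x m w hP j hjm y hy hrel)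
    κ hK κ' hK' hmm hh

/-- There cannot be half cells with two different normals. -/
lemma no_two (A : Set (Fin 3 → ℤ)) (a b : Fin 3 → ℤ) (hab : ∀ j, a j ≤ b j)
    (Hyp : ∀ κ, (∃ c, c ∈ zcell κ ∧ c ∈ zbox a b) →
      (∀ c ∈ zcell κ, c ∈ A) ∨ (∀ c ∈ zcell κ, c ∉ A) ∨
      ∃ m w, (w = κ m ∨ w = κ m + 1) ∧ ∀ c ∈ zcell κ, (c ∈ A ↔ c m = w))
    (κ₁ κ₂ : Fin 3 → ℤ) (m₁ m₂ : Fin 3) (w₁ w₂ : ℤ)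
    (h1 : HalfCell A κ₁ m₁ w₁) (hK1 : Kpred a b κ₁)
    (h2 : HalfCell A κ₂ m₂ w₂) (hK2 : Kpred a b κ₂) (hne : m₁ ≠ m₂) : False := by
  set κ₃ : Fin 3 → ℤ := fun l => if l = m₁ then κ₁ l else κ₂ l with hκ₃
  have hK3 : Kpred a b κ₃ := by
    intro j; rw [hκ₃]; dsimp only
    split_ifs
    · exact hK1 j
    · exact hK2 j
  have h1' : HalfCell A κ₃ m₁ w₁ := by
    apply half_prop A a b hab Hyp m₁ w₁ κ₁ κ₃ hK1 hK3 ?_ h1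
    rw [hκ₃]; simp
  have h2' : HalfCell A κ₃ m₂ w₂ := by
    apply half_prop A a b hab Hyp m₂ w₂ κ₂ κ₃ hK2 hK3 ?_ h2
    rw [hκ₃]; simp [Ne.symm hne]
  set u : ℤ := if w₂ = κ₃ m₂ then κ₃ m₂ + 1 else κ₃ m₂ with hu
  have humem : u = κ₃ m₂ ∨ u = κ₃ m₂ + 1 := by rw [hu]; split_ifs <;> simp
  have hune : u ≠ w₂ := by
    rw [hu]; rcases h2'.1 with h | h <;> split_ifs with h' <;> omega
  obtain ⟨c, hc, hcj, hcm⟩ := exists_pt κ₃ m₂ m₁ (Ne.symm hne) u w₁ humem h1'.1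
  have hcA : c ∈ A := (h1'.2 c hc).mpr hcm
  have := (h2'.2 c hc).mp hcA
  rw [hcj] at this; exact hune this

/-- The combinatorial core: the trichotomy on all cells meeting a box forces a laminate. -/
lemma core (A : Set (Fin 3 → ℤ)) (a b : Fin 3 → ℤ)
    (Hyp : ∀ κ, (∃ c, c ∈ zcell κ ∧ c ∈ zbox a b) →
      (∀ c ∈ zcell κ, c ∈ A) ∨ (∀ c ∈ zcell κ, c ∉ A) ∨
      ∃ m w, (w = κ m ∨ w = κ m + 1) ∧ ∀ c ∈ zcell κ, (c ∈ A ↔ c m = w)) :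
    ∃ m, ∀ p ∈ zbox a b, ∀ q ∈ zbox a b, p m = q m → (p ∈ A ↔ q ∈ A) := by
  by_cases hne : (zbox a b).Nonempty
  swap
  · exact ⟨0, fun p hp => absurd ⟨p, hp⟩ hne⟩
  obtain ⟨w0, hw0⟩ := hne
  have hab : ∀ j, a j ≤ b j := fun j => le_trans (hw0 j).1 (hw0 j).2
  have hKofB : ∀ p, p ∈ zbox a b → Kpred a b p := by
    intro p hp j; have := hp j; omega
  have hcellself : ∀ p : Fin 3 → ℤ, p ∈ zcell p := fun p j => Or.inl rfl
  -- a "jump" in direction m produces a half cell with normal m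
  have jump_half : ∀ (m : Fin 3) (p : Fin 3 → ℤ), p ∈ zbox a b →
      Function.update p m (p m + 1) ∈ zbox a b →
      ¬(p ∈ A ↔ Function.update p m (p m + 1) ∈ A) →
      ∃ w, HalfCell A p m w := by
    intro m p hp hq hiff
    set q := Function.update p m (p m + 1) with hqdef
    have hqcell : q ∈ zcell p := by
      intro l
      by_cases hl : l = m
      · subst hl; rw [hqdef, Function.update_self]; right; rfl
      · rw [hqdef, Function.update_of_ne hl]; left; rfl
    rcases Hyp p ⟨p, hcellself p, hp⟩ with hfull | hempty | ⟨m', w, hw, hhalf⟩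
    · exact absurd (iff_of_true (hfull p (hcellself p)) (hfull q hqcell)) hiff
    · exact absurd (iff_of_false (hempty p (hcellself p)) (hempty q hqcell)) hiff
    · by_cases hm' : m' = m
      · subst hm'; exact ⟨w, hw, hhalf⟩
      · exfalso
        have hpq : p m' = q m' := by rw [hqdef, Function.update_of_ne hm']
        apply hiff
        rw [hhalf p (hcellself p), hhalf q hqcell, hpq]
  by_cases hjump : ∃ (m : Fin 3) (p : Fin 3 → ℤ), p ∈ zbox a b ∧
      Function.update p m (p m + 1) ∈ zbox a b ∧
      ¬(p ∈ A ↔ Function.update p m (p m + 1) ∈ A)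
  · obtain ⟨m, p0, hp0, hq0, hiff0⟩ := hjump
    obtain ⟨w0', hhalf0⟩ := jump_half m p0 hp0 hq0 hiff0
    refine ⟨m, fun p hp q hq hpq => ?_⟩
    have := path_induction a b (fun x => (p ∈ A ↔ x ∈ A)) m ?_ p hp q hq hpq Iff.rfl
    · exact this
    · intro x hx j hjm y hy hrel hP
      have hxy : x ∈ A ↔ y ∈ A := by
        by_contra hno
        have : ∃ w, HalfCell A x j w ∨ HalfCell A y j w := by
          rcases hrel with h | h
          · obtain ⟨w, hw⟩ := jump_half j x hx (h ▸ hy) (h ▸ hno)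
            exact ⟨w, Or.inl hw⟩
          · obtain ⟨w, hw⟩ := jump_half j y hy (h ▸ hx)
              (h ▸ fun hi => hno (Iff.symm hi))
            exact ⟨w, Or.inr hw⟩
        obtain ⟨w, hw | hw⟩ := this
        · exact no_two A a b hab Hyp x p0 j m w w0' hw (hKofB x hx) hhalf0
            (hKofB p0 hp0) hjm
        · exact no_two A a b hab Hyp y p0 j m w w0' hw (hKofB y hy) hhalf0
            (hKofB p0 hp0) hjm
      exact hP.trans hxy
  · push_neg at hjump
    refine ⟨0, fun p hp q hq hpq => ?_⟩
    refine path_induction a b (fun x => (p ∈ A ↔ x ∈ A)) 0 ?_ p hp q hq hpq Iff.rfl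
    intro x hx j hjm y hy hrel hP
    have hxy : x ∈ A ↔ y ∈ A := by
      rcases hrel with h | h
      · rw [h]; exact hjump j x hx (h ▸ hy)
      · rw [h]; exact (hjump j y hy (h ▸ hx)).symm
    exact hP.trans hxy


def iota (ε : ℝ) (n : Fin 3 → ℤ) : E3 := WithLp.toLp 2 (fun j => ε * n j)

lemma lat_iota (ε : ℝ) (n : Fin 3 → ℤ) : lat ε (iota ε n) := fun j => ⟨n j, rfl⟩

lemma exists_int_of_lat {ε : ℝ} {p : E3} (h : lat ε p) : ∃ n, p = iota ε n :=
  ⟨fun j => Classical.choose (h j), congrArg (WithLp.toLp 2) (funext fun j => Classical.choose_spec (h j))⟩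

lemma iota_coord_inj {ε : ℝ} (hε : 0 < ε) {x y : ℤ} (h : ε * (x : ℝ) = ε * y) : x = y := by
  have := mul_left_cancel₀ (ne_of_gt hε) h; exact_mod_cast this

lemma mem_cellcube_iff {ε : ℝ} (hε : 0 < ε) (κ c : Fin 3 → ℤ) :
    iota ε c ∈ cube (2 * ε) (hat ε (iota ε κ)) ↔ c ∈ zcell κ := by
  constructor
  · intro h j
    have e1 : (ε * (κ j : ℝ) + ε / 2) - (2 * ε) / 2 ≤ ε * c j := (h j).1
    have e2 : ε * (c j : ℝ) < (ε * (κ j : ℝ) + ε / 2) + (2 * ε) / 2 := (h j).2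
    have l1 : ε * ((κ j : ℝ) - 1) < ε * c j := by nlinarith
    have l2 : ε * (c j : ℝ) < ε * ((κ j : ℝ) + 2) := by nlinarith
    have i1 : (κ j : ℝ) - 1 < c j := lt_of_mul_lt_mul_left l1 (le_of_lt hε)
    have i2 : (c j : ℝ) < (κ j : ℝ) + 2 := lt_of_mul_lt_mul_left l2 (le_of_lt hε)
    have i1' : (κ j : ℤ) - 1 < c j := by exact_mod_cast i1
    have i2' : (c j : ℤ) < (κ j : ℤ) + 2 := by exact_mod_cast i2
    omega
  · intro h j
    have hc : ((c j : ℝ) = κ j) ∨ ((c j : ℝ) = (κ j : ℝ) + 1) := by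
      rcases h j with h' | h'
      · left; exact_mod_cast h'
      · right; exact_mod_cast h'
    constructor
    · show (ε * (κ j : ℝ) + ε / 2) - (2 * ε) / 2 ≤ ε * (c j : ℝ)
      rcases hc with h' | h' <;> rw [h'] <;> nlinarith
    · show ε * (c j : ℝ) < (ε * (κ j : ℝ) + ε / 2) + (2 * ε) / 2
      rcases hc with h' | h' <;> rw [h'] <;> nlinarith

lemma mem_bigcube_iff {ε : ℝ} (hε : 0 < ε) (η : ℝ) (i : E3) (n : Fin 3 → ℤ) :
    iota ε n ∈ cube η i ↔
      n ∈ zbox (fun j => ⌈(i j - η / 2) / ε⌉) (fun j => ⌈(i j + η / 2) / ε⌉ - 1) := by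
  constructor
  · intro h j
    have h1 : i j - η / 2 ≤ ε * (n j : ℝ) := (h j).1
    have h2 : ε * (n j : ℝ) < i j + η / 2 := (h j).2
    constructor
    · show (⌈(i j - η / 2) / ε⌉ : ℤ) ≤ n j
      rw [Int.ceil_le, div_le_iff₀ hε]
      have := mul_comm (n j : ℝ) ε; linarith
    · have hx : (n j : ℝ) < (i j + η / 2) / ε := by
        rw [lt_div_iff₀ hε]
        have := mul_comm (n j : ℝ) ε; linarith
      have h3 : (n j : ℝ) < (⌈(i j + η / 2) / ε⌉ : ℝ) := lt_of_lt_of_le hx (Int.le_ceil _)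
      have h4 : n j < ⌈(i j + η / 2) / ε⌉ := by exact_mod_cast h3
      show n j ≤ ⌈(i j + η / 2) / ε⌉ - 1
      omega
  · intro h j
    have h1 : (⌈(i j - η / 2) / ε⌉ : ℤ) ≤ n j := (h j).1
    have h2 : n j ≤ ⌈(i j + η / 2) / ε⌉ - 1 := (h j).2
    constructor
    · show i j - η / 2 ≤ ε * (n j : ℝ)
      have h3 := Int.ceil_le.mp h1
      rw [div_le_iff₀ hε] at h3
      have := mul_comm (n j : ℝ) ε; linarith
    · show ε * (n j : ℝ) < i j + η / 2
      have hc : (n j : ℝ) ≤ (⌈(i j + η / 2) / ε⌉ : ℝ) - 1 := by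
        have h3 : (n j : ℝ) ≤ ((⌈(i j + η / 2) / ε⌉ - 1 : ℤ) : ℝ) := by exact_mod_cast h2
        push_cast at h3; linarith
      have hlt : (⌈(i j + η / 2) / ε⌉ : ℝ) < (i j + η / 2) / ε + 1 := Int.ceil_lt_add_one _
      have h5 : (n j : ℝ) < (i j + η / 2) / ε := by linarith
      rw [lt_div_iff₀ hε] at h5
      have := mul_comm (n j : ℝ) ε; linarith

lemma cellcube_sub {ε η : ℝ} {i y k : E3} (hy1 : y ∈ cube η i)
    (hy2 : y ∈ cube (2 * ε) (hat ε k)) :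
    cube (2 * ε) (hat ε k) ⊆ cube (η + 4 * ε) i := by
  intro z hz j
  have a1 := (hy1 j).1; have a2 := (hy1 j).2
  have b1 := (hy2 j).1; have b2 := (hy2 j).2
  have c1 := (hz j).1; have c2 := (hz j).2
  constructor
  · linarith
  · linarith

lemma trichotomy {ε η : ℝ} (hε : 0 < ε) {i : E3} {U E : Set E3}
    (hQU : cube (η + 4 * ε) i ⊆ U) (hflat : LocallyFlat ε η U E i)
    (κ : Fin 3 → ℤ) (hmeet : ∃ c, c ∈ zcell κ ∧ iota ε c ∈ cube η i) :
    (∀ c ∈ zcell κ, iota ε c ∈ E) ∨ (∀ c ∈ zcell κ, iota ε c ∉ E) ∨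
    ∃ m w, (w = κ m ∨ w = κ m + 1) ∧ ∀ c ∈ zcell κ, (iota ε c ∈ E ↔ c m = w) := by
  obtain ⟨c₀, hc₀cell, hc₀cube⟩ := hmeet
  set k := iota ε κ with hk
  have hc₀C : iota ε c₀ ∈ cube (2 * ε) (hat ε k) := (mem_cellcube_iff hε κ c₀).mpr hc₀cell
  have hCsub : cube (2 * ε) (hat ε k) ⊆ U := fun z hz => hQU (cellcube_sub hc₀cube hc₀C hz)
  have hne : (cube η i ∩ cube (2 * ε) (hat ε k)).Nonempty := ⟨iota ε c₀, hc₀cube, hc₀C⟩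
  rcases hflat k (lat_iota ε κ) hne with h | h | ⟨m, v, hv, h⟩
  · left; intro c hc
    have hcC : iota ε c ∈ cube (2 * ε) (hat ε k) := (mem_cellcube_iff hε κ c).mpr hc
    have hmem : iota ε c ∈ Zset ε (cube (2 * ε) (hat ε k)) ∩ U :=
      ⟨⟨lat_iota ε c, hcC⟩, hCsub hcC⟩
    rw [← h] at hmem; exact hmem.1
  · right; left; intro c hc hcE
    have hcC : iota ε c ∈ cube (2 * ε) (hat ε k) := (mem_cellcube_iff hε κ c).mpr hc
    have hmem : iota ε c ∈ E ∩ cube (2 * ε) (hat ε k) := ⟨hcE, hcC⟩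
    rw [h] at hmem; exact hmem
  · right; right
    refine ⟨m, ?_⟩
    rcases hv with hv | hv
    · refine ⟨κ m, Or.inl rfl, fun c hc => ?_⟩
      have hcC : iota ε c ∈ cube (2 * ε) (hat ε k) := (mem_cellcube_iff hε κ c).mpr hc
      constructor
      · intro hcE
        have hmem : iota ε c ∈ halfPattern ε k m v ∩ U := by
          rw [← h]; exact ⟨hcE, hcC⟩
        have h3 : ε * (c m : ℝ) = v := hmem.1.2.2
        rw [hv] at h3
        exact iota_coord_inj hε h3
      · intro hcm
        have hmem : iota ε c ∈ halfPattern ε k m v ∩ U := by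
          refine ⟨⟨lat_iota ε c, hcC, ?_⟩, hCsub hcC⟩
          show ε * (c m : ℝ) = v
          rw [hv]
          show ε * (c m : ℝ) = ε * (κ m : ℝ)
          exact_mod_cast congrArg (fun t : ℤ => ε * (t : ℝ)) hcm
        rw [← h] at hmem; exact hmem.1
    · refine ⟨κ m + 1, Or.inr rfl, fun c hc => ?_⟩
      have hcC : iota ε c ∈ cube (2 * ε) (hat ε k) := (mem_cellcube_iff hε κ c).mpr hc
      have hv' : v = ε * ((κ m : ℝ) + 1) := by
        rw [hv]
        show ε * (κ m : ℝ) + ε = ε * ((κ m : ℝ) + 1)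
        ring
      constructor
      · intro hcE
        have hmem : iota ε c ∈ halfPattern ε k m v ∩ U := by
          rw [← h]; exact ⟨hcE, hcC⟩
        have h3 : ε * (c m : ℝ) = v := hmem.1.2.2
        rw [hv'] at h3
        have h4 : (c m : ℝ) = (κ m : ℝ) + 1 := mul_left_cancel₀ (ne_of_gt hε) h3
        exact_mod_cast h4
      · intro hcm
        have hmem : iota ε c ∈ halfPattern ε k m v ∩ U := by
          refine ⟨⟨lat_iota ε c, hcC, ?_⟩, hCsub hcC⟩
          show ε * (c m : ℝ) = v
          rw [hv']
          have h4 : (c m : ℝ) = (κ m : ℝ) + 1 := by exact_mod_cast hcm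
          rw [h4]
        rw [← h] at hmem; exact hmem.1

end S0Aux

/-- Lemma 3.2, "Laminates".  If `Q_{η+4ε}(i) ⊆ U` and `E ⊆ Z_ε(Ω)` is
locally flat in `Q_η(i)` with respect to `U`, then `E` is a simple coordinate laminate
in `Q_η(i)`. -/
theorem statement0 (ε ηε η : ℝ) (hε : 0 < ε) (hηε : 0 < ηε)
    (hratio : ∃ n : ℕ, ηε = (n : ℝ) * ε)
    (Ω U : Set E3) (hΩ : IsOpen Ω) (hU : IsOpen U) (hΩU : Ω ⊆ U)
    (i : E3) (hi : i ∈ Zset ε U) (hη : ηε ≤ η)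
    (hQU : cube (η + 4 * ε) i ⊆ U)
    (E : Set E3) (hE : E ⊆ Zset ε Ω)
    (hflat : LocallyFlat ε η U E i) :
    Laminate ε U (cube η i) E := by
  classical
  set a : Fin 3 → ℤ := fun j => ⌈(i j - η / 2) / ε⌉ with ha
  set b : Fin 3 → ℤ := fun j => ⌈(i j + η / 2) / ε⌉ - 1 with hb
  set A : Set (Fin 3 → ℤ) := {n | S0Aux.iota ε n ∈ E} with hA
  have hbox : ∀ n : Fin 3 → ℤ, S0Aux.iota ε n ∈ cube η i ↔ n ∈ S0Aux.zbox a b :=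
    fun n => S0Aux.mem_bigcube_iff hε η i n
  have Hyp : ∀ κ, (∃ c, c ∈ S0Aux.zcell κ ∧ c ∈ S0Aux.zbox a b) →
      (∀ c ∈ S0Aux.zcell κ, c ∈ A) ∨ (∀ c ∈ S0Aux.zcell κ, c ∉ A) ∨
      ∃ m w, (w = κ m ∨ w = κ m + 1) ∧ ∀ c ∈ S0Aux.zcell κ, (c ∈ A ↔ c m = w) := by
    rintro κ ⟨c, hc, hcb⟩
    exact S0Aux.trichotomy hε hQU hflat κ ⟨c, hc, (hbox c).mpr hcb⟩
  obtain ⟨m, hm⟩ := S0Aux.core A a b Hyp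
  refine ⟨m, fun v => ∃ p, p ∈ Zset ε (cube η i) ∩ E ∧ p m = v, ?_⟩
  intro x hx
  constructor
  · intro h; exact ⟨⟨x, h, rfl⟩, h.1⟩
  · rintro ⟨⟨p, ⟨⟨hplat, hpcube⟩, hpE⟩, hpm⟩, hxcube⟩
    refine ⟨hxcube, ?_⟩
    obtain ⟨np, hnp⟩ := S0Aux.exists_int_of_lat hplat
    obtain ⟨nx, hnx⟩ := S0Aux.exists_int_of_lat hxcube.1
    subst hnp
    have hpm' : ε * (np m : ℝ) = ε * (nx m : ℝ) := by rw [hnx] at hpm; exact hpm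
    have hmm : np m = nx m := S0Aux.iota_coord_inj hε hpm'
    have hxc : S0Aux.iota ε nx ∈ cube η i := by rw [← hnx]; exact hxcube.2
    have hiff := hm np ((hbox np).mp hpcube) nx ((hbox nx).mp hxc) hmm
    rw [hnx]
    exact hiff.mp hpE
end
end

section
/- Let ε, η_ε > 0 with η_ε/ε ∈ ℕ, let Ω ⊆ U be open subsets of ℝ³, and let i ∈ η_εℤ³ be such that Q_{3η_ε}(i) ⊆ Ω. Let E ⊆ Z_ε(Ω) be a simple coordinate laminate in Q_{3η_ε}(i) and let E_{η_ε} be its η_ε-scale replacement. Then F^per_ε(E_{η_ε}, Q_{η_ε}(i)) ≤ F^per_ε(E, Q_{η_ε}(i)). -/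
open Set Filter MeasureTheory Metric
open scoped BigOperators ENNReal Topology

noncomputable section

attribute [local instance] Classical.propDecidable

/-- Embedding of `ℤ³` into `ℝ³`. -/
def toE3 (ξ : Fin 3 → ℤ) : E3 := WithLp.toLp 2 (fun j => (ξ j : ℝ))

/-- The coordinate unit vector `e_m` of `ℤ³`. -/
def unitZ (m : Fin 3) : Fin 3 → ℤ := fun j => if j = m then 1 else 0

/-- Discrete anisotropic perimeter energy
`F^per_ε(E,A) = Σ_{i ∈ Z_ε(A) ∩ E} Σ_{ξ ∈ V, i+εξ ∈ Z_ε(U)} ε² c_ξ (1 - χ_E(i+εξ))`. -/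
noncomputable def Fper (ε : ℝ) (V : Finset (Fin 3 → ℤ)) (c : (Fin 3 → ℤ) → ℝ)
    (U E A : Set E3) : ℝ :=
  ∑' i : ↥(Zset ε A ∩ E), ∑ ξ ∈ V,
    if (↑i + ε • toE3 ξ) ∈ Zset ε U ∧ (↑i + ε • toE3 ξ) ∉ E then ε ^ 2 * c ξ else 0

/-- Discrete curvature energy `F^curv_ε(E,A) = Σ_{i ∈ Z_ε(A)} ε³ W(i)`, where
`W i = W^curv_ε(i,E)`. -/
noncomputable def Fcurv (ε : ℝ) (W : E3 → ℝ) (A : Set E3) : ℝ :=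
  ∑' i : ↥(Zset ε A), ε ^ 3 * W ↑i

/-- `W` is a curvature cell energy at scale `ε`, mesoscale `ηm`, with parameters
`γ, q` and constants `0 < cc ≤ C0`, for subsets of `Z_ε(Ω)`, flatness being understood
with respect to `U`. -/
def IsCurvCell (ε ηm γ q cc C0 : ℝ) (Ω U : Set E3) (W : E3 → Set E3 → ℝ) : Prop :=
  (∀ i E, lat ε i → E ⊆ Zset ε Ω → 0 ≤ W i E) ∧
  (∀ i E, lat ε i → E ⊆ Zset ε Ω → FlatSet ε ηm U E i → W i E = 0) ∧
  (∀ i E, lat ε i → E ⊆ Zset ε Ω → ¬ LocallyFlat ε ηm U E i →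
      cc * γ * ηm ^ (-1 - q : ℝ) ≤ W i E) ∧
  (∀ i E, lat ε i → E ⊆ Zset ε Ω → CubicSet ε ηm ηm U E i →
      W i E ≤ C0 * γ * ηm ^ (-1 - q : ℝ))

/-- The `ηm`-scale replacement
`E_{ηm} := ⋃ {Z_ε(Q_{ηm}(i)) : i ∈ ηmℤ³, E ∩ Q_{ηm}(i) ≠ ∅} ∩ Ω`. -/
def etaRepl (ε ηm : ℝ) (Ω E : Set E3) : Set E3 :=
  {x | lat ε x ∧ x ∈ Ω ∧
    ∃ i : E3, (∀ j, ∃ n : ℤ, i j = ηm * n) ∧ x ∈ cube ηm i ∧ (E ∩ cube ηm i).Nonempty}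


lemma zset_cube_finite {ε : ℝ} (hε : 0 < ε) (ρ : ℝ) (x : E3) : (Zset ε (cube ρ x)).Finite := by
  have hsub : Zset ε (cube ρ x) ⊆ (fun z : Fin 3 → ℤ => (WithLp.toLp 2 (fun j => ε * (z j : ℝ)) : E3)) ''
      (Set.univ.pi fun j => Set.Icc ⌈(x j - ρ/2)/ε⌉ ⌊(x j + ρ/2)/ε⌋) := by
    rintro y ⟨hlat, hcube⟩
    choose nn hnn using hlat
    refine ⟨nn, fun j _ => ?_, PiLp.ext fun j => (hnn j).symm⟩
    have h1 := (hcube j).1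
    have h2 := (hcube j).2
    rw [hnn j] at h1 h2
    constructor
    · rw [Int.ceil_le, div_le_iff₀ hε]; linarith
    · rw [Int.le_floor, le_div_iff₀ hε]; linarith
  exact Set.Finite.subset (Set.Finite.image _ (Set.Finite.pi fun j => Set.finite_Icc _ _)) hsub

lemma tsum_subtype_finite {S : Set E3} (hS : S.Finite) (F : E3 → ℝ) :
    ∑' x : ↥S, F ↑x = ∑ x ∈ hS.toFinset, F x := by
  letI := hS.fintype
  rw [tsum_fintype]
  exact (Finset.sum_subtype hS.toFinset (fun x => hS.mem_toFinset) F).symm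

lemma flip_exists (P : ℕ → Prop) : ∀ n, P 0 → ¬ P n → ∃ j, j < n ∧ P j ∧ ¬ P (j+1) := by
  intro n
  induction n with
  | zero => intro h0 hn; exact absurd h0 hn
  | succ k ih =>
    intro h0 hn
    by_cases hk : P k
    · exact ⟨k, Nat.lt_succ_self k, hk, hn⟩
    · obtain ⟨j, hj, a, b⟩ := ih h0 hk
      exact ⟨j, hj.trans (Nat.lt_succ_self k), a, b⟩

set_option maxHeartbeats 2000000 in
lemma per_xi (ε ηm : ℝ) (hε : 0 < ε) (hηm : 0 < ηm) (n : ℕ) (hn : ηm = n * ε) (hn1 : 1 ≤ n)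
    (Ω U : Set E3) (hΩU : Ω ⊆ U) (i : E3) (hi : ∀ j, ∃ z : ℤ, i j = ηm * z)
    (hQΩ : cube (3*ηm) i ⊆ Ω) (E : Set E3) (hE : E ⊆ Zset ε Ω)
    (m : Fin 3) (hfun : ℝ → Prop)
    (memE : ∀ j : E3, lat ε j → j ∈ cube (3*ηm) i → (j ∈ E ↔ hfun (j m)))
    (ξ : Fin 3 → ℤ) (hξb : ∀ j, |ξ j| ≤ 1) (w : ℝ) (hw : 0 ≤ w)
    (A B : Finset E3)
    (hA : ∀ x, x ∈ A ↔ x ∈ Zset ε (cube ηm i) ∩ etaRepl ε ηm Ω E)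
    (hB : ∀ x, x ∈ B ↔ x ∈ Zset ε (cube ηm i) ∩ E) :
    (∑ x ∈ A, if (x + ε • toE3 ξ) ∈ Zset ε U ∧ (x + ε • toE3 ξ) ∉ etaRepl ε ηm Ω E then w else 0)
      ≤ ∑ x ∈ B, if (x + ε • toE3 ξ) ∈ Zset ε U ∧ (x + ε • toE3 ξ) ∉ E then w else 0 := by
  classical
  have hnR : (1:ℝ) ≤ n := by exact_mod_cast hn1
  have hεη : ε ≤ ηm := by rw [hn]; nlinarith
  have happ : ∀ (x : E3) (j : Fin 3), (x + ε • toE3 ξ) j = x j + ε * (ξ j : ℝ) := fun _ _ => rfl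
  have hξr : ∀ j, -(1:ℝ) ≤ (ξ j : ℝ) ∧ (ξ j : ℝ) ≤ 1 := by
    intro j
    obtain ⟨h1, h2⟩ := abs_le.mp (hξb j)
    exact ⟨by exact_mod_cast h1, by exact_mod_cast h2⟩
  have hQQ3 : cube ηm i ⊆ cube (3*ηm) i := by
    intro x hx j
    obtain ⟨h1, h2⟩ := hx j
    constructor <;> [linarith; linarith]
  have hnbrQ3 : ∀ x : E3, x ∈ cube ηm i → (x + ε • toE3 ξ) ∈ cube (3*ηm) i := by
    intro x hx j
    obtain ⟨h1, h2⟩ := hx j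
    have h3 := (hξr j).1; have h4 := (hξr j).2
    have h5 := mul_le_mul_of_nonneg_left h3 hε.le
    have h6 := mul_le_mul_of_nonneg_left h4 hε.le
    rw [happ]
    constructor <;> linarith
  have hlat_nbr : ∀ x : E3, lat ε x → lat ε (x + ε • toE3 ξ) := by
    intro x hx j
    obtain ⟨p, hp⟩ := hx j
    exact ⟨p + ξ j, by rw [happ, hp]; push_cast; ring⟩
  have hZU_nbr : ∀ x : E3, lat ε x → x ∈ cube ηm i → (x + ε • toE3 ξ) ∈ Zset ε U :=
    fun x hl hx => ⟨hlat_nbr x hl, hΩU (hQΩ (hnbrQ3 x hx))⟩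
  have uniq : ∀ x, x ∈ cube ηm i → ∀ k : E3, (∀ j, ∃ z : ℤ, k j = ηm * z) →
      x ∈ cube ηm k → k = i := by
    intro x hx k hk hxk
    refine PiLp.ext fun j => ?_
    obtain ⟨a, ha⟩ := hi j
    obtain ⟨b, hb⟩ := hk j
    obtain ⟨h1, h2⟩ := hx j
    obtain ⟨h3, h4⟩ := hxk j
    rw [ha] at h1 h2; rw [hb] at h3 h4
    have hba : ηm * (b:ℝ) - ηm * a < ηm := by linarith
    have hab : ηm * (a:ℝ) - ηm * b < ηm := by linarith
    have e1 : ((b:ℝ) - a) * ηm < 1 * ηm := by nlinarith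
    have e2 : ((a:ℝ) - b) * ηm < 1 * ηm := by nlinarith
    have f1 : (b:ℝ) - a < 1 := lt_of_mul_lt_mul_right e1 hηm.le
    have f2 : (a:ℝ) - b < 1 := lt_of_mul_lt_mul_right e2 hηm.le
    have g1 : b - a < 1 := by exact_mod_cast (by push_cast; linarith : ((b - a : ℤ):ℝ) < 1)
    have g2 : a - b < 1 := by exact_mod_cast (by push_cast; linarith : ((a - b : ℤ):ℝ) < 1)
    have : b = a := by omega
    rw [hb, ha, this]
  -- main structural analysis of a "bad bond"
  have hmain : ∀ x : E3, lat ε x → x ∈ cube ηm i →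
      (x + ε • toE3 ξ) ∉ etaRepl ε ηm Ω E → (E ∩ cube ηm i).Nonempty →
      ((ξ m = 1 ∧ i m + ηm/2 - ε ≤ x m) ∨ (ξ m = -1 ∧ x m < i m - ηm/2 + ε)) ∧
      (∀ t' : ℝ, (∃ p : ℤ, t' = ε * p) →
        i m + ηm * (ξ m : ℝ) - ηm/2 ≤ t' → t' < i m + ηm * (ξ m : ℝ) + ηm/2 → ¬ hfun t') := by
    rintro x hlx hxQ hyR ⟨x0, hx0E, hx0Q⟩
    have hlx0 : lat ε x0 := (hE hx0E).1
    have hhx0 : hfun (x0 m) := (memE x0 hlx0 (hQQ3 hx0Q)).mp hx0E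
    set d : Fin 3 → ℤ := fun j =>
      if i j + ηm/2 ≤ (x + ε • toE3 ξ) j then 1
      else if (x + ε • toE3 ξ) j < i j - ηm/2 then -1 else 0 with hd
    have hdb : ∀ j, d j = 1 ∨ d j = 0 ∨ d j = -1 := by
      intro j; rw [hd]; dsimp only; split_ifs <;> simp
    have hdbr : ∀ j, -(1:ℝ) ≤ (d j : ℝ) ∧ (d j : ℝ) ≤ 1 := by
      intro j; rcases hdb j with h | h | h <;> rw [h] <;> norm_num
    set k : E3 := WithLp.toLp 2 (fun j => i j + ηm * (d j : ℝ)) with hk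
    have hkj : ∀ j, k j = i j + ηm * (d j : ℝ) := fun _ => rfl
    have hklat : ∀ j, ∃ z : ℤ, k j = ηm * (z:ℝ) := by
      intro j; obtain ⟨z, hz⟩ := hi j
      exact ⟨z + d j, by rw [hkj, hz]; push_cast; ring⟩
    have hkmem : (x + ε • toE3 ξ) ∈ cube ηm k := by
      intro j
      obtain ⟨h1, h2⟩ := hxQ j
      have h3 := (hξr j).1; have h4 := (hξr j).2
      have h5 := mul_le_mul_of_nonneg_left h3 hε.le
      have h6 := mul_le_mul_of_nonneg_left h4 hε.le
      have hX1 : i j - ηm/2 - ε ≤ (x + ε • toE3 ξ) j := by rw [happ]; linarith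
      have hX2 : (x + ε • toE3 ξ) j < i j + ηm/2 + ε := by rw [happ]; linarith
      rw [hkj, hd]; dsimp only
      split_ifs with hA1 hB1
      · push_cast; constructor <;> linarith
      · push_cast; constructor <;> linarith
      · push_cast; constructor <;> linarith
    have hlaty : lat ε (x + ε • toE3 ξ) := hlat_nbr x hlx
    have hyΩ : (x + ε • toE3 ξ) ∈ Ω := hQΩ (hnbrQ3 x hxQ)
    have hkempty : E ∩ cube ηm k = ∅ := by
      by_contra hne
      exact hyR ⟨hlaty, hyΩ, k, hklat, hkmem, Set.nonempty_iff_ne_empty.mpr hne⟩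
    have hdm0 : d m ≠ 0 := by
      intro hdm
      set j0 : E3 := WithLp.toLp 2 (fun j => x0 j + ηm * (d j : ℝ)) with hj0
      have hj0j : ∀ j, j0 j = x0 j + ηm * (d j : ℝ) := fun _ => rfl
      have hj0k : j0 ∈ cube ηm k := by
        intro j
        obtain ⟨h1, h2⟩ := hx0Q j
        rw [hj0j, hkj]
        constructor <;> linarith
      have hj0Q3 : j0 ∈ cube (3*ηm) i := by
        intro j
        obtain ⟨h1, h2⟩ := hx0Q j
        have h3 := (hdbr j).1; have h4 := (hdbr j).2
        have h5 := mul_le_mul_of_nonneg_left h3 hηm.le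
        have h6 := mul_le_mul_of_nonneg_left h4 hηm.le
        rw [hj0j]
        constructor <;> linarith
      have hlj0 : lat ε j0 := by
        intro j
        obtain ⟨p, hp⟩ := hlx0 j
        exact ⟨p + n * d j, by rw [hj0j, hp, hn]; push_cast; ring⟩
      have hj0E : j0 ∈ E := by
        refine (memE j0 hlj0 hj0Q3).mpr ?_
        rw [hj0j, hdm]
        simpa using hhx0
      exact Set.eq_empty_iff_forall_notMem.mp hkempty j0 ⟨hj0E, hj0k⟩
    have hkm := hkmem m
    rw [hkj, happ] at hkm
    obtain ⟨hxm1, hxm2⟩ := hxQ m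
    have hdmv : d m = 1 ∨ d m = -1 := by
      rcases hdb m with h | h | h
      exacts [Or.inl h, absurd h hdm0, Or.inr h]
    obtain ⟨hξa1, hξa2⟩ := abs_le.mp (hξb m)
    have hkey : d m = ξ m ∧
        ((ξ m = 1 ∧ i m + ηm/2 - ε ≤ x m) ∨ (ξ m = -1 ∧ x m < i m - ηm/2 + ε)) := by
      rcases hdmv with h | h
      · rw [h] at hkm; push_cast at hkm
        have hm0 : (0:ℝ) < ε * (ξ m : ℝ) := by linarith [hkm.1]
        have hmp : (0:ℝ) < (ξ m : ℝ) := by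
          by_contra hle
          push_neg at hle
          nlinarith
        have hξ1 : ξ m = 1 := by
          have h0 : 0 < ξ m := by exact_mod_cast hmp
          omega
        have hc : ((ξ m : ℤ) : ℝ) = 1 := by rw [hξ1]; norm_num
        rw [hc] at hkm
        exact ⟨h.trans hξ1.symm, Or.inl ⟨hξ1, by linarith [hkm.1]⟩⟩
      · rw [h] at hkm; push_cast at hkm
        have hm0 : ε * (ξ m : ℝ) < 0 := by linarith [hkm.2]
        have hmp : (ξ m : ℝ) < 0 := by
          by_contra hle
          push_neg at hle
          nlinarith
        have hξ1 : ξ m = -1 := by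
          have h0 : ξ m < 0 := by exact_mod_cast hmp
          omega
        have hc : ((ξ m : ℤ) : ℝ) = -1 := by rw [hξ1]; norm_num
        rw [hc] at hkm
        exact ⟨h.trans hξ1.symm, Or.inr ⟨hξ1, by linarith [hkm.2]⟩⟩
    obtain ⟨hdmξ, hside⟩ := hkey
    refine ⟨hside, ?_⟩
    rintro t' ⟨p, hp⟩ hlo hhi hht'
    have hkmR : k m = i m + ηm * (ξ m : ℝ) := by rw [hkj, hdmξ]
    have hξmR : (ξ m : ℝ) = 1 ∨ (ξ m : ℝ) = -1 := by
      rcases hside with ⟨h, _⟩ | ⟨h, _⟩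
      · left; rw [h]; norm_num
      · right; rw [h]; norm_num
    set js : E3 := WithLp.toLp 2 (fun j => if j = m then t' else k j) with hjs
    have hjsj : ∀ j, js j = if j = m then t' else k j := fun _ => rfl
    have hjs_k : js ∈ cube ηm k := by
      intro j
      rw [hjsj]
      by_cases hjm : j = m
      · rw [if_pos hjm, hjm, hkmR]; exact ⟨hlo, hhi⟩
      · rw [if_neg hjm]; constructor <;> linarith
    have hjsQ3 : js ∈ cube (3*ηm) i := by
      intro j
      rw [hjsj]
      by_cases hjm : j = m
      · rw [if_pos hjm, hjm]
        rcases hξmR with h | h <;> rw [h] at hlo hhi <;> constructor <;> linarith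
      · rw [if_neg hjm, hkj]
        have h3 := (hdbr j).1; have h4 := (hdbr j).2
        have h5 := mul_le_mul_of_nonneg_left h3 hηm.le
        have h6 := mul_le_mul_of_nonneg_left h4 hηm.le
        constructor <;> linarith
    have hljs : lat ε js := by
      intro j
      rw [hjsj]
      by_cases hjm : j = m
      · rw [if_pos hjm]; exact ⟨p, hp⟩
      · rw [if_neg hjm]
        obtain ⟨z, hz⟩ := hklat j
        exact ⟨n * z, by rw [hz, hn]; push_cast; ring⟩
    have hjsE : js ∈ E := by
      refine (memE js hljs hjsQ3).mpr ?_
      rw [hjsj, if_pos rfl]; exact hht'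
    exact Set.eq_empty_iff_forall_notMem.mp hkempty js ⟨hjsE, hjs_k⟩
  -- now compare the sums
  by_cases hvac : ∀ x ∈ A,
      (if (x + ε • toE3 ξ) ∈ Zset ε U ∧ (x + ε • toE3 ξ) ∉ etaRepl ε ηm Ω E then w else 0) = 0
  · rw [Finset.sum_eq_zero hvac]
    refine Finset.sum_nonneg fun x hx => ?_
    split_ifs
    exacts [hw, le_rfl]
  · push_neg at hvac
    obtain ⟨xs, hxsA, hxsne⟩ := hvac
    obtain ⟨⟨hlxs, hxsQ⟩, hxsR⟩ := (hA xs).mp hxsA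
    have hcond : (xs + ε • toE3 ξ) ∈ Zset ε U ∧ (xs + ε • toE3 ξ) ∉ etaRepl ε ηm Ω E := by
      by_contra hc
      exact hxsne (if_neg hc)
    obtain ⟨_, _, i', hi'lat, hxi', hEne⟩ := hxsR
    have hEQ : (E ∩ cube ηm i).Nonempty := by
      have := uniq xs hxsQ i' hi'lat hxi'
      rwa [this] at hEne
    obtain ⟨hsideS, hnoh⟩ := hmain xs hlxs hxsQ hcond.2 hEQ
    obtain ⟨x0, hx0E, hx0Q⟩ := id hEQ
    have hlx0 : lat ε x0 := (hE hx0E).1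
    have hhx0 : hfun (x0 m) := (memE x0 hlx0 (hQQ3 hx0Q)).mp hx0E
    obtain ⟨p0, hp0⟩ := hlx0 m
    have hξmR : (ξ m : ℝ) = 1 ∨ (ξ m : ℝ) = -1 := by
      rcases hsideS with ⟨h, _⟩ | ⟨h, _⟩
      · left; rw [h]; norm_num
      · right; rw [h]; norm_num
    have hP0 : hfun (x0 m + ε * (ξ m : ℝ) * ((0:ℕ):ℝ)) := by
      norm_num
      exact hhx0
    have hPn : ¬ hfun (x0 m + ε * (ξ m : ℝ) * ((n:ℕ):ℝ)) := by
      have hrw : ε * (ξ m : ℝ) * ((n:ℕ):ℝ) = ηm * (ξ m : ℝ) := by rw [hn]; ring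
      refine hnoh _ ⟨p0 + ξ m * n, by rw [hp0]; push_cast; ring⟩ ?_ ?_
      · rw [hrw]; linarith [(hx0Q m).1]
      · rw [hrw]; linarith [(hx0Q m).2]
    obtain ⟨jj, hjjn, hPj, hPj1⟩ :=
      flip_exists (fun j => hfun (x0 m + ε * (ξ m : ℝ) * (j:ℝ))) n hP0 hPn
    set t : ℝ := x0 m + ε * (ξ m : ℝ) * (jj:ℝ) with ht
    have htlat : ∃ p : ℤ, t = ε * p := ⟨p0 + ξ m * jj, by rw [ht, hp0]; push_cast; ring⟩
    have hht : hfun t := hPj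
    have hhts : ¬ hfun (t + ε * (ξ m : ℝ)) := by
      have hrw : t + ε * (ξ m : ℝ) = x0 m + ε * (ξ m : ℝ) * ((jj:ℝ) + 1) := by rw [ht]; ring
      rw [hrw]
      have : ((jj + 1 : ℕ):ℝ) = (jj:ℝ) + 1 := by push_cast; ring
      rw [← this]
      exact hPj1
    have hεjj : ε * (jj:ℝ) < ηm := by
      have hj : (jj:ℝ) < (n:ℝ) := by exact_mod_cast hjjn
      rw [hn]; nlinarith
    have hεjj0 : (0:ℝ) ≤ ε * (jj:ℝ) := by positivity
    obtain ⟨hx0m1, hx0m2⟩ := hx0Q m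
    have htR : i m - ηm/2 ≤ t ∧ t < i m + ηm/2 := by
      rcases hξmR with h | h
      · constructor
        · rw [ht, h]; linarith
        · by_contra hub
          push_neg at hub
          have h1 : i m + ηm * (ξ m : ℝ) - ηm/2 ≤ t := by rw [h]; linarith
          have h2 : t < i m + ηm * (ξ m : ℝ) + ηm/2 := by rw [ht, h]; linarith
          exact absurd hht (hnoh t htlat h1 h2)
      · constructor
        · by_contra hlb
          push_neg at hlb
          have h1 : i m + ηm * (ξ m : ℝ) - ηm/2 ≤ t := by rw [ht, h]; linarith
          have h2 : t < i m + ηm * (ξ m : ℝ) + ηm/2 := by rw [h]; linarith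
          exact absurd hht (hnoh t htlat h1 h2)
        · rw [ht, h]; linarith
    set φ : E3 → E3 := fun x => (WithLp.toLp 2 (fun j => if j = m then t else x j) : E3) with hφ
    have hφj : ∀ (x : E3) (j : Fin 3), φ x j = if j = m then t else x j := fun _ _ => rfl
    set A' : Finset E3 := A.filter (fun x =>
      (if (x + ε • toE3 ξ) ∈ Zset ε U ∧ (x + ε • toE3 ξ) ∉ etaRepl ε ηm Ω E then w else 0) ≠ 0)
      with hA'
    have hA'sub : ∀ x ∈ A', lat ε x ∧ x ∈ cube ηm i ∧
        (x + ε • toE3 ξ) ∉ etaRepl ε ηm Ω E := by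
      intro x hx
      rw [hA', Finset.mem_filter] at hx
      obtain ⟨⟨hl, hq⟩, _⟩ := (hA x).mp hx.1
      by_cases hcc : (x + ε • toE3 ξ) ∈ Zset ε U ∧ (x + ε • toE3 ξ) ∉ etaRepl ε ηm Ω E
      · exact ⟨hl, hq, hcc.2⟩
      · exact absurd (if_neg hcc) hx.2
    have hpin : ∀ x, lat ε x → x ∈ cube ηm i → (x + ε • toE3 ξ) ∉ etaRepl ε ηm Ω E →
        ∀ x', lat ε x' → x' ∈ cube ηm i → (x' + ε • toE3 ξ) ∉ etaRepl ε ηm Ω E →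
        x m = x' m := by
      intro x hl hq hr x' hl' hq' hr'
      obtain ⟨q1, hq1⟩ := hl m
      obtain ⟨q1', hq1'⟩ := hl' m
      have hb := (hmain x hl hq hr hEQ).1
      have hb' := (hmain x' hl' hq' hr' hEQ).1
      have e2 := (hq m).2
      have e2' := (hq' m).2
      have e1 := (hq m).1
      have e1' := (hq' m).1
      have key : x m < x' m + ε ∧ x' m < x m + ε := by
        rcases hb with ⟨hm1, hbb⟩ | ⟨hm1, hbb⟩ <;> rcases hb' with ⟨hm1', hbb'⟩ | ⟨hm1', hbb'⟩
        · exact ⟨by linarith, by linarith⟩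
        · rw [hm1] at hm1'; exact absurd hm1' (by norm_num)
        · rw [hm1] at hm1'; exact absurd hm1' (by norm_num)
        · exact ⟨by linarith, by linarith⟩
      have c1 : (q1:ℝ) < (q1':ℝ) + 1 := by
        by_contra hge
        push_neg at hge
        have := mul_le_mul_of_nonneg_left hge hε.le
        rw [hq1, hq1'] at key
        nlinarith [key.1]
      have c2 : (q1':ℝ) < (q1:ℝ) + 1 := by
        by_contra hge
        push_neg at hge
        have := mul_le_mul_of_nonneg_left hge hε.le
        rw [hq1, hq1'] at key
        nlinarith [key.2]
      have d1 : q1 < q1' + 1 := by exact_mod_cast c1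
      have d2 : q1' < q1 + 1 := by exact_mod_cast c2
      have : q1 = q1' := by omega
      rw [hq1, hq1', this]
    have hφB : ∀ x ∈ A', φ x ∈ B ∧
        ((φ x + ε • toE3 ξ) ∈ Zset ε U ∧ (φ x + ε • toE3 ξ) ∉ E) := by
      intro x hx
      obtain ⟨hl, hq, hr⟩ := hA'sub x hx
      have hlφ : lat ε (φ x) := by
        intro j
        by_cases hjm : j = m
        · rw [hφj, if_pos hjm]; exact htlat
        · rw [hφj, if_neg hjm]; exact hl j
      have hφQ : φ x ∈ cube ηm i := by
        intro j
        by_cases hjm : j = m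
        · rw [hφj, if_pos hjm, hjm]; exact htR
        · rw [hφj, if_neg hjm]; exact hq j
      have hφE : φ x ∈ E := by
        refine (memE (φ x) hlφ (hQQ3 hφQ)).mpr ?_
        rw [hφj, if_pos rfl]; exact hht
      have hyU : (φ x + ε • toE3 ξ) ∈ Zset ε U := hZU_nbr (φ x) hlφ hφQ
      have hynE : (φ x + ε • toE3 ξ) ∉ E := by
        intro hmem
        have hh := (memE _ (hlat_nbr (φ x) hlφ) (hnbrQ3 (φ x) hφQ)).mp hmem
        have heq : (φ x + ε • toE3 ξ) m = t + ε * (ξ m : ℝ) := by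
          rw [happ, hφj, if_pos rfl]
        rw [heq] at hh
        exact hhts hh
      exact ⟨(hB (φ x)).mpr ⟨⟨hlφ, hφQ⟩, hφE⟩, hyU, hynE⟩
    have hinj : ∀ x ∈ A', ∀ x' ∈ A', φ x = φ x' → x = x' := by
      intro x hx x' hx' heq
      obtain ⟨hl, hq, hr⟩ := hA'sub x hx
      obtain ⟨hl', hq', hr'⟩ := hA'sub x' hx'
      refine PiLp.ext fun j => ?_
      by_cases hjm : j = m
      · rw [hjm]; exact hpin x hl hq hr x' hl' hq' hr'
      · have hjeq : φ x j = φ x' j := by rw [heq]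
        rw [hφj, hφj, if_neg hjm, if_neg hjm] at hjeq
        exact hjeq
    calc (∑ x ∈ A, if (x + ε • toE3 ξ) ∈ Zset ε U ∧
            (x + ε • toE3 ξ) ∉ etaRepl ε ηm Ω E then w else 0)
        = ∑ x ∈ A', (if (x + ε • toE3 ξ) ∈ Zset ε U ∧
            (x + ε • toE3 ξ) ∉ etaRepl ε ηm Ω E then w else 0) :=
          (Finset.sum_filter_ne_zero A).symm
      _ = ∑ x ∈ A', w := by
          refine Finset.sum_congr rfl fun x hx => ?_
          rw [hA', Finset.mem_filter] at hx
          by_cases hcc : (x + ε • toE3 ξ) ∈ Zset ε U ∧ (x + ε • toE3 ξ) ∉ etaRepl ε ηm Ω E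
          · exact if_pos hcc
          · exact absurd (if_neg hcc) hx.2
      _ = ∑ y ∈ A'.image φ, w := (Finset.sum_image (f := fun _ => w) hinj).symm
      _ = ∑ y ∈ A'.image φ, (if (y + ε • toE3 ξ) ∈ Zset ε U ∧
            (y + ε • toE3 ξ) ∉ E then w else 0) := by
          refine Finset.sum_congr rfl fun y hy => ?_
          obtain ⟨x, hx, rfl⟩ := Finset.mem_image.mp hy
          exact (if_pos (hφB x hx).2).symm
      _ ≤ ∑ y ∈ B, (if (y + ε • toE3 ξ) ∈ Zset ε U ∧
            (y + ε • toE3 ξ) ∉ E then w else 0) := by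
          refine Finset.sum_le_sum_of_subset_of_nonneg ?_ fun y _ _ => ?_
          · intro y hy
            obtain ⟨x, hx, rfl⟩ := Finset.mem_image.mp hy
            exact (hφB x hx).1
          · split_ifs
            exacts [hw, le_rfl]

set_option maxHeartbeats 2000000 in
/-- Step 1.2 in the proof of Lemma 3.4: good cubes.  If `E` is a
simple coordinate laminate in `Q_{3η_ε}(i)` with `Q_{3η_ε}(i) ⊆ Ω` and `i ∈ η_εℤ³`, then
the `η_ε`-scale replacement does not increase the discrete perimeter energy in
`Q_{η_ε}(i)`. -/
theorem statement3 (ε ηm : ℝ) (hε : 0 < ε) (hηm : 0 < ηm)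
    (hratio : ∃ n : ℕ, ηm = (n : ℝ) * ε)
    (Ω U : Set E3) (hΩ : IsOpen Ω) (hU : IsOpen U) (hΩU : Ω ⊆ U)
    (V : Finset (Fin 3 → ℤ)) (c : (Fin 3 → ℤ) → ℝ)
    (hV0 : ∀ ξ ∈ V, ξ ≠ 0) (hV1 : ∀ ξ ∈ V, ∀ j, |ξ j| ≤ 1)
    (hVe : ∀ m : Fin 3, unitZ m ∈ V ∧ -unitZ m ∈ V)
    (hVsymm : ∀ ξ ∈ V, -ξ ∈ V)
    (hcpos : ∀ ξ ∈ V, 0 < c ξ) (hcsymm : ∀ ξ ∈ V, c (-ξ) = c ξ)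
    (i : E3) (hi : ∀ j, ∃ n : ℤ, i j = ηm * n)
    (hQΩ : cube (3 * ηm) i ⊆ Ω)
    (E : Set E3) (hE : E ⊆ Zset ε Ω)
    (hlam : Laminate ε U (cube (3 * ηm) i) E) :
    Fper ε V c U (etaRepl ε ηm Ω E) (cube ηm i) ≤ Fper ε V c U E (cube ηm i) := by
  obtain ⟨m, hfun, hlamh⟩ := hlam
  obtain ⟨n, hn⟩ := hratio
  have hn1 : 1 ≤ n := by
    by_contra hc
    push_neg at hc
    have h0 : n = 0 := by omega
    rw [h0] at hn
    norm_num at hn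
    linarith
  have memE : ∀ j : E3, lat ε j → j ∈ cube (3 * ηm) i → (j ∈ E ↔ hfun (j m)) := by
    intro j hl hj
    have hjU : j ∈ Zset ε U := ⟨hl, hΩU (hQΩ hj)⟩
    have hiff := hlamh j hjU
    constructor
    · intro hjE; exact (hiff.mp ⟨⟨hl, hj⟩, hjE⟩).1
    · intro hh; exact (hiff.mpr ⟨hh, hl, hj⟩).2
  have hfinL := (zset_cube_finite hε ηm i).inter_of_left (etaRepl ε ηm Ω E)
  have hfinR := (zset_cube_finite hε ηm i).inter_of_left E
  have eqL : Fper ε V c U (etaRepl ε ηm Ω E) (cube ηm i)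
      = ∑ x ∈ hfinL.toFinset, ∑ ξ ∈ V,
          (if (x + ε • toE3 ξ) ∈ Zset ε U ∧ (x + ε • toE3 ξ) ∉ etaRepl ε ηm Ω E
           then ε ^ 2 * c ξ else 0) :=
    tsum_subtype_finite hfinL (fun x => ∑ ξ ∈ V,
      (if (x + ε • toE3 ξ) ∈ Zset ε U ∧ (x + ε • toE3 ξ) ∉ etaRepl ε ηm Ω E
       then ε ^ 2 * c ξ else 0))
  have eqR : Fper ε V c U E (cube ηm i)
      = ∑ x ∈ hfinR.toFinset, ∑ ξ ∈ V,
          (if (x + ε • toE3 ξ) ∈ Zset ε U ∧ (x + ε • toE3 ξ) ∉ E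
           then ε ^ 2 * c ξ else 0) :=
    tsum_subtype_finite hfinR (fun x => ∑ ξ ∈ V,
      (if (x + ε • toE3 ξ) ∈ Zset ε U ∧ (x + ε • toE3 ξ) ∉ E
       then ε ^ 2 * c ξ else 0))
  rw [eqL, eqR, Finset.sum_comm]
  conv_rhs => rw [Finset.sum_comm]
  refine Finset.sum_le_sum fun ξ hξ => ?_
  exact per_xi ε ηm hε hηm n hn hn1 Ω U hΩU i hi hQΩ E hE m hfun memE ξ (hV1 ξ hξ)
    (ε ^ 2 * c ξ) (mul_nonneg (sq_nonneg ε) (hcpos ξ hξ).le) hfinL.toFinset hfinR.toFinset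
    (fun x => hfinL.mem_toFinset) (fun x => hfinR.mem_toFinset)
end
end

section
/- Let Ω ⊂ ℝ³ be bounded and open, let E ⊆ ℝ³ be measurable with cl(E) ⊂ Ω, and let ε, η_ε > 0 with η_ε/ε ∈ ℕ and √3·η_ε < dist(E, ∂Ω). Define E_ε := ⋃_{i ∈ η_εℤ³ ∩ E} Z_ε(Q_{η_ε}(i)) ∩ Ω and Q_ε(E_ε) := ⋃_{j ∈ E_ε} Q_ε(j). Then (Q_ε(E_ε) ∩ Ω) △ E ⊆ {x ∈ ℝ³ : dist(x, ∂E) ≤ √3·(η_ε + ε)/2}. In particular, if L³(∂E) = 0 and η_ε → 0 as ε → 0, then χ_{Q_ε(E_ε) ∩ Ω} → χ_E in L¹(Ω). -/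
open Set Filter MeasureTheory Metric
open scoped BigOperators ENNReal Topology

noncomputable section

attribute [local instance] Classical.propDecidable

/-- The discrete recovery set `E_ε := ⋃_{i ∈ η_εℤ³ ∩ E} Z_ε(Q_{η_ε}(i)) ∩ Ω`. -/
def Eeps (ε ηm : ℝ) (Ω E : Set E3) : Set E3 :=
  {x | lat ε x ∧ x ∈ Ω ∧
    ∃ i : E3, (∀ j, ∃ n : ℤ, i j = ηm * n) ∧ i ∈ E ∧ x ∈ cube ηm i}

/-- `Q_ε(F) := ⋃_{j ∈ F} Q_ε(j)`. -/
def Qeps (ε : ℝ) (F : Set E3) : Set E3 := ⋃ j ∈ F, cube ε j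

/- ### Auxiliary lemmas -/


lemma dist_le_of_mem_cube {ρ : ℝ} (hρ : 0 ≤ ρ) {x c : E3} (h : x ∈ cube ρ c) :
    dist x c ≤ Real.sqrt 3 * ρ / 2 := by
  rw [EuclideanSpace.dist_eq]
  have h1 : ∀ k : Fin 3, dist (x k) (c k) ^ 2 ≤ (ρ/2)^2 := by
    intro k
    obtain ⟨h1, h2⟩ := h k
    rw [Real.dist_eq, sq_abs]
    nlinarith
  have hsum : ∑ k, dist (x k) (c k) ^ 2 ≤ 3 * (ρ/2)^2 :=
    calc ∑ k : Fin 3, dist (x k) (c k) ^ 2 ≤ ∑ _k : Fin 3, (ρ/2)^2 :=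
          Finset.sum_le_sum (fun k _ => h1 k)
      _ = 3 * (ρ/2)^2 := by
          rw [Finset.sum_const, Finset.card_univ, Fintype.card_fin]; ring
  calc Real.sqrt (∑ k, dist (x k) (c k) ^ 2) ≤ Real.sqrt (3 * (ρ/2)^2) :=
        Real.sqrt_le_sqrt hsum
    _ = Real.sqrt 3 * (ρ/2) := by
        rw [Real.sqrt_mul (by norm_num), Real.sqrt_sq (by linarith)]
    _ = Real.sqrt 3 * ρ / 2 := by ring

/-- The nearest lattice point of the grid `ρℤ³`. -/
def roundLat (ρ : ℝ) (x : E3) : E3 := WithLp.toLp 2 (fun k => ρ * (round (x k / ρ) : ℤ))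

lemma lat_roundLat (ρ : ℝ) (x : E3) : lat ρ (roundLat ρ x) := fun k => ⟨round (x k / ρ), rfl⟩

lemma mem_cube_roundLat {ρ : ℝ} (hρ : 0 < ρ) (x : E3) : x ∈ cube ρ (roundLat ρ x) := by
  intro k
  set t := x k / ρ with ht
  have hx : x k = ρ * t := by rw [ht, mul_div_assoc']; exact (mul_div_cancel_left₀ _ hρ.ne').symm
  have h1 : (round t : ℝ) ≤ t + 1/2 := by rw [round_eq]; exact Int.floor_le _
  have h2 : t + 1/2 < (round t : ℝ) + 1 := by rw [round_eq]; exact Int.lt_floor_add_one _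
  constructor
  · show ρ * (round t : ℝ) - ρ/2 ≤ x k
    rw [hx]; nlinarith
  · show x k < ρ * (round t : ℝ) + ρ/2
    rw [hx]; nlinarith

/-- A segment joining a point of `E` to a point outside `E` meets `∂E`. -/
lemma exists_frontier_mem {E : Set E3} {x y : E3} (hx : x ∈ E) (hy : y ∉ E) :
    ∃ z ∈ frontier E, dist x z ≤ dist x y := by
  have hconn : IsPreconnected (segment ℝ x y) := (convex_segment x y).isPreconnected
  have hne : (segment ℝ x y ∩ frontier E).Nonempty := by
    by_contra hfe
    rw [Set.not_nonempty_iff_eq_empty] at hfe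
    have hsub : segment ℝ x y ⊆ interior E ∪ (closure E)ᶜ := by
      intro z hz
      by_cases hzE : z ∈ interior E
      · exact Or.inl hzE
      · right
        intro hzc
        have : z ∈ frontier E := ⟨hzc, hzE⟩
        exact absurd (Set.mem_inter hz this) (by simp [hfe])
    have := hconn (interior E) ((closure E)ᶜ) isOpen_interior isClosed_closure.isOpen_compl
      hsub
      ⟨x, left_mem_segment ℝ x y, by
        by_contra hxi
        have : x ∈ frontier E := ⟨subset_closure hx, hxi⟩
        exact absurd (Set.mem_inter (left_mem_segment ℝ x y) this) (by simp [hfe])⟩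
      ⟨y, right_mem_segment ℝ x y, fun hyc => hy (by
        by_contra hyE
        have : y ∈ frontier E := ⟨hyc, fun hyi => hyE (interior_subset hyi)⟩
        exact absurd (Set.mem_inter (right_mem_segment ℝ x y) this) (by simp [hfe]))⟩
    obtain ⟨z, _, hz1, hz2⟩ := this
    exact hz2 (subset_closure (interior_subset hz1))
  obtain ⟨z, hzseg, hzf⟩ := hne
  refine ⟨z, hzf, ?_⟩
  obtain ⟨a, b, ha, hb, hab, rfl⟩ := hzseg
  have heq : x - (a • x + b • y) = b • (x - y) := by
    rw [smul_sub]; rw [show a = 1 - b by linarith]; module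
  rw [dist_eq_norm, heq, norm_smul, Real.norm_eq_abs, abs_of_nonneg hb, dist_eq_norm]
  nlinarith [norm_nonneg (x - y)]

lemma infDist_frontier_le {E : Set E3} {x y : E3} (hx : x ∈ E) (hy : y ∉ E) :
    infDist x (frontier E) ≤ dist x y := by
  obtain ⟨z, hz, hd⟩ := exists_frontier_mem hx hy
  exact le_trans (infDist_le_dist_of_mem hz) hd

/-- For `E` compactly contained in the bounded open set `Ω`, the
symmetric difference of `Q_ε(E_ε) ∩ Ω` and `E` is contained in the
`√3(η_ε+ε)/2`-neighbourhood of `∂E`; in particular, if `L³(∂E) = 0` and `η_ε → 0`, the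
indicator functions of `Q_ε(E_ε) ∩ Ω` converge to `χ_E` in `L¹(Ω)`. -/
theorem statement14
    (Ω : Set E3) (hΩo : IsOpen Ω) (hΩb : Bornology.IsBounded Ω)
    (E : Set E3) (hEm : MeasurableSet E) (hEcl : closure E ⊆ Ω)
    (ε η : ℕ → ℝ) (hε : ∀ n, 0 < ε n) (hη : ∀ n, 0 < η n)
    (hratio : ∀ n, ∃ m : ℕ, η n = (m : ℝ) * ε n)
    (hdist : ∀ n, ∀ x ∈ E, ∀ y ∈ frontier Ω, Real.sqrt 3 * η n < dist x y) :
    (∀ n, symmDiff (Qeps (ε n) (Eeps (ε n) (η n) Ω E) ∩ Ω) E ⊆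
        {x : E3 | Metric.infDist x (frontier E) ≤ Real.sqrt 3 * (η n + ε n) / 2}) ∧
      (volume (frontier E) = 0 → Tendsto η atTop (𝓝 0) →
        Tendsto (fun n => volume (symmDiff (Qeps (ε n) (Eeps (ε n) (η n) Ω E) ∩ Ω) E))
          atTop (𝓝 0)) := by
  have s3pos : (0:ℝ) < Real.sqrt 3 := Real.sqrt_pos.2 (by norm_num)
  have hεη : ∀ n, ε n ≤ η n := by
    intro n
    obtain ⟨m, hm⟩ := hratio n
    have hm1 : 1 ≤ m := by
      by_contra h
      interval_cases m
      simp at hm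
      exact absurd hm (ne_of_gt (hη n))
    have : (1:ℝ) ≤ m := by exact_mod_cast hm1
    nlinarith [hε n, hη n]
  have part1 : ∀ n, symmDiff (Qeps (ε n) (Eeps (ε n) (η n) Ω E) ∩ Ω) E ⊆
      {x : E3 | Metric.infDist x (frontier E) ≤ Real.sqrt 3 * (η n + ε n) / 2} := by
    intro n x hx
    rw [Set.mem_symmDiff] at hx
    have hkey : Real.sqrt 3 * (η n + ε n) / 2
        = Real.sqrt 3 * ε n / 2 + Real.sqrt 3 * η n / 2 := by ring
    rcases hx with ⟨⟨hQ, _⟩, hxE⟩ | ⟨hxE, hnot⟩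
    · -- x ∈ Qeps ∩ Ω, x ∉ E
      simp only [Qeps, Set.mem_iUnion] at hQ
      obtain ⟨j, hj, hxj⟩ := hQ
      obtain ⟨hjlat, hjΩ, i, hilat, hiE, hji⟩ := hj
      have d1 : dist x j ≤ Real.sqrt 3 * ε n / 2 := dist_le_of_mem_cube (hε n).le hxj
      have d2 : dist j i ≤ Real.sqrt 3 * η n / 2 := dist_le_of_mem_cube (hη n).le hji
      have hbound : infDist x (frontier E) ≤ dist x i := by
        have := infDist_frontier_le (E := Eᶜ) hxE (by simpa using hiE)
        rwa [frontier_compl] at this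
      have := dist_triangle x j i
      simp only [Set.mem_setOf_eq, hkey]
      linarith
    · -- x ∈ E, x ∉ Qeps ∩ Ω
      have hxΩ : x ∈ Ω := hEcl (subset_closure hxE)
      have hxQ : x ∉ Qeps (ε n) (Eeps (ε n) (η n) Ω E) := fun h => hnot ⟨h, hxΩ⟩
      set j := roundLat (ε n) x with hjdef
      have hxj : x ∈ cube (ε n) j := mem_cube_roundLat (hε n) x
      have d1 : dist x j ≤ Real.sqrt 3 * ε n / 2 := dist_le_of_mem_cube (hε n).le hxj
      have hjΩ : j ∈ Ω := by
        by_contra hjΩ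
        obtain ⟨z, hz, hdz⟩ := exists_frontier_mem hxΩ hjΩ
        have := hdist n x hxE z hz
        nlinarith [hη n, hε n, hεη n]
      set i := roundLat (η n) j with hidef
      have hji : j ∈ cube (η n) i := mem_cube_roundLat (hη n) j
      have d2 : dist j i ≤ Real.sqrt 3 * η n / 2 := dist_le_of_mem_cube (hη n).le hji
      have hiE : i ∉ E := by
        intro hiE
        apply hxQ
        simp only [Qeps, Set.mem_iUnion]
        exact ⟨j, ⟨lat_roundLat _ _, hjΩ, i, lat_roundLat _ _, hiE, hji⟩, hxj⟩
      have hbound : infDist x (frontier E) ≤ dist x i := infDist_frontier_le hxE hiE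
      have := dist_triangle x j i
      simp only [Set.mem_setOf_eq, hkey]
      linarith
  refine ⟨part1, ?_⟩
  intro hvol0 hη0
  by_cases hfe : frontier E = ∅
  · -- E is clopen, hence (being bounded) empty
    rcases frontier_eq_empty_iff.1 hfe with hE | hE
    · subst hE
      have hq : ∀ n, symmDiff (Qeps (ε n) (Eeps (ε n) (η n) Ω (∅ : Set E3)) ∩ Ω)
          (∅ : Set E3) = ∅ := by
        intro n
        have : Eeps (ε n) (η n) Ω (∅ : Set E3) = ∅ := by
          ext x; simp [Eeps]
        simp [this, Qeps]
      simp only [hq]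
      simpa using tendsto_const_nhds (α := ℝ≥0∞) (x := 0) (f := atTop (α := ℕ))
    · exfalso
      obtain ⟨R, hR⟩ := hΩb.subset_ball 0
      have hp : (EuclideanSpace.single (0 : Fin 3) (|R| + 1) : E3) ∈ Ω := by
        apply hEcl; rw [hE]; simp
      have := hR hp
      rw [mem_ball, dist_zero_right, EuclideanSpace.norm_single, Real.norm_eq_abs,
        abs_of_nonneg (by positivity)] at this
      linarith [le_abs_self R, abs_nonneg R]
  · have hfne : (frontier E).Nonempty := Set.nonempty_iff_ne_empty.2 hfe
    set r : ℕ → ℝ := fun n => Real.sqrt 3 * (η n + ε n) / 2 with hrdef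
    have hr0 : ∀ n, 0 ≤ r n := fun n => by
      have := hε n; have := hη n; positivity
    have hrt : Tendsto r atTop (𝓝 0) := by
      have hub : Tendsto (fun n => Real.sqrt 3 * η n) atTop (𝓝 0) := by
        simpa using hη0.const_mul (Real.sqrt 3)
      refine squeeze_zero hr0 (fun n => ?_) hub
      have := hεη n; have := hε n
      simp only [hrdef]
      nlinarith
    have hsub : ∀ n, symmDiff (Qeps (ε n) (Eeps (ε n) (η n) Ω E) ∩ Ω) E ⊆
        cthickening (r n) (frontier E) := by
      intro n x hx
      have h2 : infDist x (frontier E) ≤ r n := part1 n hx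
      rw [mem_cthickening_iff]
      exact (ENNReal.le_ofReal_iff_toReal_le (infEdist_ne_top hfne) (hr0 n)).2 h2
    have hfin : ∃ R > 0, volume (cthickening R (frontier E)) ≠ ∞ := by
      refine ⟨1, one_pos, ?_⟩
      have hb : Bornology.IsBounded (frontier E) :=
        (hΩb.subset (le_trans frontier_subset_closure hEcl))
      exact hb.cthickening.measure_lt_top.ne
    have hcth : Tendsto (fun n => volume (cthickening (r n) (frontier E))) atTop
        (𝓝 (volume (frontier E))) :=
      (tendsto_measure_cthickening_of_isClosed hfin isClosed_frontier).comp hrt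
    rw [hvol0] at hcth
    exact tendsto_of_tendsto_of_tendsto_of_le_of_le tendsto_const_nhds hcth
      (fun n => zero_le) (fun n => measure_mono (hsub n))
end
end

section
/- Let ε, η_ε > 0 with η_ε/ε ∈ ℕ, let Ω ⊆ U be open subsets of ℝ³, and let i ∈ εℤ³ with Q_{η_ε}(i) ⊆ U. Suppose E ⊆ Z_ε(Ω) is a simple coordinate laminate in Q_{η_ε}(i) with normal ν ∈ {e₁,e₂,e₃}, and suppose ∅ ≠ E ∩ Q_{η_ε}(i) ≠ Z_ε(Q_{η_ε}(i)). Then F^per_ε(E, Q_{η_ε}(i)) ≥ c_ν·η_ε², where c_ν is the weight of the neighbor ξ = ν ∈ V. -/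
open Set Filter MeasureTheory Metric
open scoped BigOperators ENNReal Topology

noncomputable section

attribute [local instance] Classical.propDecidable

private lemma boundary_aux16 (H : ℤ → Prop) : ∀ d : ℕ, ∀ z : ℤ, H z → ¬ H (z + ((d : ℤ) + 1)) →
    ∃ w : ℤ, z ≤ w ∧ w < z + ((d : ℤ) + 1) ∧ H w ∧ ¬ H (w + 1) := by
  intro d
  induction d with
  | zero =>
    intro z hz hz1
    exact ⟨z, le_refl _, by omega, hz, by simpa using hz1⟩
  | succ d ih =>
    intro z hz hz1
    by_cases h1 : H (z + 1)
    · obtain ⟨w, hw1, hw2, hw3, hw4⟩ := ih (z + 1) h1 (by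
        rw [show z + 1 + ((d : ℤ) + 1) = z + (((d : ℕ) + 1 : ℕ) + 1) by push_cast; ring]
        exact hz1)
      refine ⟨w, by omega, by push_cast at hw2 ⊢; omega, hw3, hw4⟩
    · exact ⟨z, le_refl _, by push_cast; omega, hz, h1⟩

private lemma boundary16 (H : ℤ → Prop) (z0 z1 : ℤ) (h0 : H z0) (h1 : ¬ H z1) :
    ∃ w σ : ℤ, (σ = 1 ∨ σ = -1) ∧ H w ∧ ¬ H (w + σ) ∧
      min z0 z1 ≤ w ∧ w ≤ max z0 z1 ∧ min z0 z1 ≤ w + σ ∧ w + σ ≤ max z0 z1 := by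
  rcases lt_trichotomy z0 z1 with h | h | h
  · obtain ⟨w, hw1, hw2, hw3, hw4⟩ := boundary_aux16 H (z1 - z0 - 1).toNat z0 h0 (by
      rw [show z0 + (((z1 - z0 - 1).toNat : ℤ) + 1) = z1 by omega]; exact h1)
    exact ⟨w, 1, Or.inl rfl, hw3, hw4, by omega, by omega, by omega, by omega⟩
  · exact absurd (h ▸ h0) h1
  · obtain ⟨w, hw1, hw2, hw3, hw4⟩ := boundary_aux16 (fun z => H (-z)) (z0 - z1 - 1).toNat (-z0)
      (by simpa using h0) (by
        rw [show -z0 + (((z0 - z1 - 1).toNat : ℤ) + 1) = -z1 by omega]; simpa using h1)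
    refine ⟨-w, -1, Or.inr rfl, by simpa using hw3, ?_, by omega, by omega, by omega, by omega⟩
    rw [show -w + -1 = -(w + 1) by ring]
    exact hw4

/-- If `E` is a simple coordinate laminate in `Q_{η_ε}(i) ⊆ U` with
normal `ν = e_m`, which is neither empty nor all of `Z_ε(Q_{η_ε}(i))` there, then
`F^per_ε(E, Q_{η_ε}(i)) ≥ c_ν·η_ε²`. -/
theorem statement16 (ε ηm : ℝ) (hε : 0 < ε) (hηm : 0 < ηm)
    (hratio : ∃ n : ℕ, ηm = (n : ℝ) * ε)
    (Ω U : Set E3) (hΩ : IsOpen Ω) (hU : IsOpen U) (hΩU : Ω ⊆ U)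
    (V : Finset (Fin 3 → ℤ)) (c : (Fin 3 → ℤ) → ℝ)
    (hV0 : ∀ ξ ∈ V, ξ ≠ 0) (hV1 : ∀ ξ ∈ V, ∀ j, |ξ j| ≤ 1)
    (hVe : ∀ m : Fin 3, unitZ m ∈ V ∧ -unitZ m ∈ V)
    (hVsymm : ∀ ξ ∈ V, -ξ ∈ V)
    (hcpos : ∀ ξ ∈ V, 0 < c ξ) (hcsymm : ∀ ξ ∈ V, c (-ξ) = c ξ)
    (i : E3) (hi : lat ε i) (hQU : cube ηm i ⊆ U)
    (E : Set E3) (hE : E ⊆ Zset ε Ω)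
    (m : Fin 3) (hlam : LaminateWith ε U (cube ηm i) E m)
    (hne : (E ∩ cube ηm i).Nonempty)
    (hproper : E ∩ cube ηm i ≠ Zset ε (cube ηm i)) :
    c (unitZ m) * ηm ^ 2 ≤ Fper ε V c U E (cube ηm i) := by
  classical
  obtain ⟨n, hn⟩ := hratio
  have hεne : ε ≠ 0 := ne_of_gt hε
  have hn0 : 0 < n := by
    by_contra hc
    have hn' : n = 0 := by omega
    rw [hn'] at hn; simp at hn; linarith
  -- starting index of the lattice range in each coordinate
  set s : Fin 3 → ℤ := fun k => ⌈(i k - ηm / 2) / ε⌉ with hs_def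
  have coordRange : ∀ (k : Fin 3) (z : ℤ),
      (i k - ηm / 2 ≤ ε * z ∧ ε * z < i k + ηm / 2) ↔ (s k ≤ z ∧ z < s k + n) := by
    intro k z
    have hceil_le : ((i k - ηm / 2) / ε) ≤ (s k : ℝ) := Int.le_ceil _
    have hceil_lt : (s k : ℝ) < (i k - ηm / 2) / ε + 1 := Int.ceil_lt_add_one _
    constructor
    · rintro ⟨h1, h2⟩
      constructor
      · refine Int.ceil_le.mpr ?_
        rw [div_le_iff₀ hε]
        nlinarith [mul_comm ε (z : ℝ)]
      · have h3 : (z : ℝ) - n < (i k - ηm / 2) / ε := by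
          rw [lt_div_iff₀ hε, sub_mul, hn] at *
          nlinarith [mul_comm ε (z : ℝ)]
        have h4 : (z : ℝ) < (s k : ℝ) + n := by linarith
        exact_mod_cast h4
    · rintro ⟨h1, h2⟩
      have h1' : ((i k - ηm / 2) / ε) ≤ (z : ℝ) := le_trans hceil_le (Int.cast_le.mpr h1)
      have h2' : (z : ℝ) - n < (i k - ηm / 2) / ε := by
        have hz2 : (z : ℝ) ≤ ((s k + n - 1 : ℤ) : ℝ) := by
          exact_mod_cast (by omega : z ≤ s k + (n : ℤ) - 1)
        push_cast at hz2
        linarith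
      constructor
      · have := (div_le_iff₀ hε).mp h1'
        nlinarith [mul_comm (z : ℝ) ε]
      · have h3 : ((z : ℝ) - n) * ε < i k - ηm / 2 := (lt_div_iff₀ hε).mp h2'
        rw [sub_mul] at h3
        rw [hn] at h3 ⊢
        nlinarith [mul_comm (z : ℝ) ε]
  have hEc : E ∩ cube ηm i ⊆ Zset ε (cube ηm i) := fun p hp => ⟨(hE hp.1).1, hp.2⟩
  have hcubeU : ∀ p, p ∈ Zset ε (cube ηm i) → p ∈ Zset ε U := fun p hp => ⟨hp.1, hQU hp.2⟩
  obtain ⟨h, hh⟩ := hlam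
  -- occupied layer z0
  obtain ⟨p0, hp0E, hp0c⟩ := hne
  have hp0Z : p0 ∈ Zset ε (cube ηm i) := ⟨(hE hp0E).1, hp0c⟩
  obtain ⟨z0, hz0⟩ := (hE hp0E).1 m
  have hz0r : s m ≤ z0 ∧ z0 < s m + n := (coordRange m z0).mp (by rw [← hz0]; exact hp0c m)
  have hHz0 : h (ε * (z0 : ℝ)) := by
    rw [← hz0]
    exact ((hh p0 (hcubeU p0 hp0Z)).mp ⟨hp0Z, hp0E⟩).1
  -- empty layer z1
  have hex : ∃ q, q ∈ Zset ε (cube ηm i) ∧ q ∉ E := by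
    by_contra hc
    push_neg at hc
    exact hproper (Set.Subset.antisymm hEc (fun q hq => ⟨hc q hq, hq.2⟩))
  obtain ⟨q0, hq0Z, hq0E⟩ := hex
  obtain ⟨z1, hz1⟩ := hq0Z.1 m
  have hz1r : s m ≤ z1 ∧ z1 < s m + n := (coordRange m z1).mp (by rw [← hz1]; exact hq0Z.2 m)
  have hHz1 : ¬ h (ε * (z1 : ℝ)) := by
    intro hcontra
    have hqm : h (q0 m) := by rw [hz1]; exact hcontra
    exact hq0E ((hh q0 (hcubeU q0 hq0Z)).mpr ⟨hqm, hq0Z⟩).2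
  -- boundary layer
  obtain ⟨w, σ, hσ, hHw, hHwσ, hb1, hb2, hb3, hb4⟩ :=
    boundary16 (fun z : ℤ => h (ε * (z : ℝ))) z0 z1 hHz0 hHz1
  have hwr : s m ≤ w ∧ w < s m + n := by omega
  have hwσr : s m ≤ w + σ ∧ w + σ < s m + n := by omega
  -- the jump direction ξ0
  obtain ⟨ξ0, hξ0V, hξ0c, hξ0app⟩ :
      ∃ ξ0, ξ0 ∈ V ∧ c ξ0 = c (unitZ m) ∧ ∀ k, toE3 ξ0 k = if k = m then (σ : ℝ) else 0 := by
    rcases hσ with h' | h'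
    · exact ⟨unitZ m, (hVe m).1, rfl,
        fun k => by by_cases hk : k = m <;> simp [toE3, unitZ, hk, h']⟩
    · exact ⟨-unitZ m, (hVe m).2, hcsymm _ (hVe m).1,
        fun k => by by_cases hk : k = m <;> simp [toE3, unitZ, hk, h']⟩
  -- the two distinguished coordinates other than m
  obtain ⟨A, B, hAm, hBm, hAB, hcover⟩ :
      ∃ A B : Fin 3, A ≠ m ∧ B ≠ m ∧ A ≠ B ∧ ∀ k : Fin 3, k = m ∨ k = A ∨ k = B := by
    have : ∀ m : Fin 3, ∃ A B : Fin 3, A ≠ m ∧ B ≠ m ∧ A ≠ B ∧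
        ∀ k : Fin 3, k = m ∨ k = A ∨ k = B := by decide
    exact this m
  -- the grid of points in the occupied boundary layer
  set zf : ℕ × ℕ → Fin 3 → ℤ :=
    fun t k => if k = m then w else s k + (if k = A then (t.1 : ℤ) else (t.2 : ℤ)) with hzf_def
  set g : ℕ × ℕ → E3 := fun t => WithLp.toLp 2 (fun k => ε * ((zf t k : ℤ) : ℝ)) with hg_def
  have hg_app : ∀ t k, g t k = ε * ((zf t k : ℤ) : ℝ) := fun t k => rfl
  have hzf_m : ∀ t, zf t m = w := fun t => by simp [hzf_def]
  have hzf_A : ∀ t, zf t A = s A + (t.1 : ℤ) := fun t => by simp [hzf_def, hAm]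
  have hzf_B : ∀ t, zf t B = s B + (t.2 : ℤ) := fun t => by simp [hzf_def, hBm, Ne.symm hAB]
  have hzf_range : ∀ t : ℕ × ℕ, t.1 < n → t.2 < n → ∀ k, s k ≤ zf t k ∧ zf t k < s k + n := by
    intro t ht1 ht2 k
    by_cases hk : k = m
    · rw [hk, hzf_m]; omega
    · have hzk : zf t k = s k + (if k = A then (t.1 : ℤ) else (t.2 : ℤ)) := by
        simp [hzf_def, hk]
      rw [hzk]; split_ifs <;> omega
  have hg_mem : ∀ t : ℕ × ℕ, t.1 < n → t.2 < n →
      g t ∈ Zset ε (cube ηm i) ∧ g t ∈ E ∧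
      (g t + ε • toE3 ξ0) ∈ Zset ε U ∧ (g t + ε • toE3 ξ0) ∉ E := by
    intro t ht1 ht2
    have hlatg : lat ε (g t) := fun k => ⟨zf t k, rfl⟩
    have hcubeg : g t ∈ cube ηm i := by
      intro k
      exact (coordRange k (zf t k)).mpr (hzf_range t ht1 ht2 k)
    have hgZ : g t ∈ Zset ε (cube ηm i) := ⟨hlatg, hcubeg⟩
    have hgU : g t ∈ Zset ε U := hcubeU _ hgZ
    have hgm : h (g t m) := by
      have hgmv : g t m = ε * ((w : ℤ) : ℝ) := by rw [hg_app, hzf_m]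
      rw [hgmv]; exact hHw
    have hgE : g t ∈ E := ((hh (g t) hgU).mpr ⟨hgm, hgZ⟩).2
    have hq_app : ∀ k, (g t + ε • toE3 ξ0) k
        = ε * ((zf t k + if k = m then σ else 0 : ℤ) : ℝ) := by
      intro k
      have hqk : (g t + ε • toE3 ξ0) k = g t k + ε * toE3 ξ0 k := rfl
      rw [hqk, hg_app, hξ0app]
      split_ifs <;> push_cast <;> ring
    have hlatq : lat ε (g t + ε • toE3 ξ0) :=
      fun k => ⟨zf t k + if k = m then σ else 0, hq_app k⟩
    have hcubeq : (g t + ε • toE3 ξ0) ∈ cube ηm i := by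
      intro k
      rw [hq_app k]
      refine (coordRange k _).mpr ?_
      have hb := hzf_range t ht1 ht2 k
      by_cases hk : k = m
      · rw [hk, hzf_m, if_pos rfl]; omega
      · rw [if_neg hk]; omega
    have hqZ : (g t + ε • toE3 ξ0) ∈ Zset ε U := ⟨hlatq, hQU hcubeq⟩
    have hqE : (g t + ε • toE3 ξ0) ∉ E := by
      intro hqE'
      have hq2 : (g t + ε • toE3 ξ0) ∈ Zset ε (cube ηm i) ∩ E := ⟨⟨hlatq, hcubeq⟩, hqE'⟩
      have hqm : h ((g t + ε • toE3 ξ0) m) := ((hh _ hqZ).mp hq2).1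
      apply hHwσ
      show h (ε * ((w + σ : ℤ) : ℝ))
      have hqmv : (g t + ε • toE3 ξ0) m = ε * ((w + σ : ℤ) : ℝ) := by
        rw [hq_app m, if_pos rfl, hzf_m]
      rw [← hqmv]; exact hqm
    exact ⟨hgZ, hgE, hqZ, hqE⟩
  -- finiteness of the index set
  have hfin : (Zset ε (cube ηm i) ∩ E).Finite := by
    have hsub : Zset ε (cube ηm i) ⊆ Set.range
        (fun t : Fin 3 → Fin n => (WithLp.toLp 2 (fun k => ε * ((s k + ((t k : ℕ) : ℤ) : ℤ) : ℝ)) : E3)) := by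
      rintro p ⟨hlatp, hcubep⟩
      have hlatp' : ∀ k, ∃ z : ℤ, p k = ε * z := hlatp
      choose z hz using hlatp'
      have hzr : ∀ k, s k ≤ z k ∧ z k < s k + n := fun k =>
        (coordRange k (z k)).mp (by rw [← hz k]; exact hcubep k)
      refine ⟨fun k => ⟨(z k - s k).toNat, by have := hzr k; omega⟩, ?_⟩
      ext k
      show ε * ((s k + (((z k - s k).toNat : ℕ) : ℤ) : ℤ) : ℝ) = p k
      rw [hz k]
      congr 1
      exact_mod_cast (by have := hzr k; omega : s k + ((z k - s k).toNat : ℤ) = z k)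
    exact ((Set.finite_range _).subset hsub).subset Set.inter_subset_left
  haveI hfint : Fintype ↥(Zset ε (cube ηm i) ∩ E) := hfin.fintype
  -- the finset of boundary-layer points
  set F : Finset E3 := (Finset.range n ×ˢ Finset.range n).image g with hF_def
  have hFS : ∀ p ∈ F, p ∈ Zset ε (cube ηm i) ∩ E := by
    intro p hp
    simp only [hF_def, Finset.mem_image, Finset.mem_product, Finset.mem_range] at hp
    obtain ⟨t, ⟨ht1, ht2⟩, rfl⟩ := hp
    exact ⟨(hg_mem t ht1 ht2).1, (hg_mem t ht1 ht2).2.1⟩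
  have hFcard : F.card = n * n := by
    rw [hF_def, Finset.card_image_of_injOn, Finset.card_product, Finset.card_range]
    intro t ht t' ht' hgt
    have hA' : g t A = g t' A := by rw [hgt]
    have hB' : g t B = g t' B := by rw [hgt]
    rw [hg_app, hg_app] at hA' hB'
    have eA : zf t A = zf t' A := by exact_mod_cast mul_left_cancel₀ hεne hA'
    have eB : zf t B = zf t' B := by exact_mod_cast mul_left_cancel₀ hεne hB'
    rw [hzf_A, hzf_A] at eA
    rw [hzf_B, hzf_B] at eB
    have e1 : t.1 = t'.1 := by omega
    have e2 : t.2 = t'.2 := by omega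
    exact Prod.ext e1 e2
  set F' : Finset ↥(Zset ε (cube ηm i) ∩ E) :=
    Finset.univ.filter (fun j => (j : E3) ∈ F) with hF'_def
  have hF'card : F'.card = n * n := by
    rw [← hFcard]
    have himg : F'.image (Subtype.val) = F := by
      ext p
      simp only [hF'_def, Finset.mem_image, Finset.mem_filter, Finset.mem_univ, true_and]
      constructor
      · rintro ⟨j, hj, rfl⟩; exact hj
      · intro hp; exact ⟨⟨p, hFS p hp⟩, hp, rfl⟩
    rw [← himg, Finset.card_image_of_injective _ Subtype.val_injective]
  have hterm_nonneg : ∀ (p : E3), ∀ ξ ∈ V,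
      0 ≤ (if (p + ε • toE3 ξ) ∈ Zset ε U ∧ (p + ε • toE3 ξ) ∉ E then ε ^ 2 * c ξ else 0) := by
    intro p ξ hξ
    split_ifs
    · exact mul_nonneg (sq_nonneg ε) (hcpos ξ hξ).le
    · exact le_refl _
  have hFper : Fper ε V c U E (cube ηm i)
      = ∑ j : ↥(Zset ε (cube ηm i) ∩ E), ∑ ξ ∈ V,
          (if ((j : E3) + ε • toE3 ξ) ∈ Zset ε U ∧ ((j : E3) + ε • toE3 ξ) ∉ E
            then ε ^ 2 * c ξ else 0) := by
    unfold Fper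
    exact tsum_fintype _
  have step1 : ∀ j ∈ F', ε ^ 2 * c (unitZ m) ≤ ∑ ξ ∈ V,
      (if ((j : E3) + ε • toE3 ξ) ∈ Zset ε U ∧ ((j : E3) + ε • toE3 ξ) ∉ E
        then ε ^ 2 * c ξ else 0) := by
    intro j hj
    have hjF : (j : E3) ∈ F := by
      simp only [hF'_def, Finset.mem_filter, Finset.mem_univ, true_and] at hj
      exact hj
    simp only [hF_def, Finset.mem_image, Finset.mem_product, Finset.mem_range] at hjF
    obtain ⟨t, ⟨ht1, ht2⟩, hgt⟩ := hjF
    obtain ⟨_, _, hqZ, hqE⟩ := hg_mem t ht1 ht2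
    have hcond : ((j : E3) + ε • toE3 ξ0) ∈ Zset ε U ∧ ((j : E3) + ε • toE3 ξ0) ∉ E := by
      rw [← hgt]; exact ⟨hqZ, hqE⟩
    have hsingle := Finset.single_le_sum
      (f := fun ξ => if ((j : E3) + ε • toE3 ξ) ∈ Zset ε U ∧ ((j : E3) + ε • toE3 ξ) ∉ E
        then ε ^ 2 * c ξ else 0)
      (fun ξ hξ => hterm_nonneg _ ξ hξ) hξ0V
    calc ε ^ 2 * c (unitZ m) = ε ^ 2 * c ξ0 := by rw [hξ0c]
      _ = (if ((j : E3) + ε • toE3 ξ0) ∈ Zset ε U ∧ ((j : E3) + ε • toE3 ξ0) ∉ E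
            then ε ^ 2 * c ξ0 else 0) := (if_pos hcond).symm
      _ ≤ _ := hsingle
  calc c (unitZ m) * ηm ^ 2
      = ∑ _j ∈ F', ε ^ 2 * c (unitZ m) := by
        rw [Finset.sum_const, nsmul_eq_mul, hF'card, hn]; push_cast; ring
    _ ≤ ∑ j ∈ F', ∑ ξ ∈ V,
          (if ((j : E3) + ε • toE3 ξ) ∈ Zset ε U ∧ ((j : E3) + ε • toE3 ξ) ∉ E
            then ε ^ 2 * c ξ else 0) := Finset.sum_le_sum step1
    _ ≤ ∑ j : ↥(Zset ε (cube ηm i) ∩ E), ∑ ξ ∈ V,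
          (if ((j : E3) + ε • toE3 ξ) ∈ Zset ε U ∧ ((j : E3) + ε • toE3 ξ) ∉ E
            then ε ^ 2 * c ξ else 0) :=
        Finset.sum_le_sum_of_subset_of_nonneg (Finset.subset_univ F')
          (fun j _ _ => Finset.sum_nonneg (fun ξ hξ => hterm_nonneg _ ξ hξ))
    _ = Fper ε V c U E (cube ηm i) := hFper.symm
end
end
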